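/- arXiv:1210.0377 — 4 statements merged into one kernel-verified Lean document; each statement's English description precedes it below -/
import Mathlib

section
/- If T1 is a semi-standard Young tableau of skew shape κ/λ and T2 is a semi-standard Young tableau of skew shape μ/ν (both with entries in {1,...,n}), then the tableau insertion T1 ⊠ T2, obtained by concatenating corresponding rows and sorting each row weakly increasingly (treating skew boxes as smaller than all entries), is a semi-standard Young tableau of skew shape (κ+μ)/(λ+ν). -/
open scoped BigOperators

/-- A partition: a weakly decreasing sequence of naturals that is eventually zero. -/
def IsPartition (f : ℕ → ℕ) : Prop :=
  (∀ i j, i ≤ j → f j ≤ f i) ∧ ∃ N, ∀ i, N ≤ i → f i = 0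

/-- Data of a (skew) filling with entries bounded by `n`: the inner shape `inner`, and for
each row the weakly increasing list of its entries.  The outer shape of the filling is
`inner i + (row i).length`, so skew boxes sit to the left of all entries of a row. -/
structure SkewTab (n : ℕ) where
  inner : ℕ → ℕ
  row : ℕ → List ℕ

namespace SkewTab

variable {n : ℕ}

/-- The outer shape. -/
def outer (T : SkewTab n) : ℕ → ℕ := fun i => T.inner i + (T.row i).length

/-- The entry in row `i`, column `j` (0-indexed); meaningful for `inner i ≤ j < outer i`. -/
def entry (T : SkewTab n) (i j : ℕ) : ℕ := (T.row i).getD (j - T.inner i) 0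

/-- `T` is a semistandard Young tableau of skew shape `outer/inner` with entries in
`{1,…,n}`: both shapes are partitions, rows are weakly increasing and columns are
strictly increasing. -/
def IsSSYT (T : SkewTab n) : Prop :=
  IsPartition T.inner ∧ IsPartition T.outer ∧
  (∀ i, (T.row i).Pairwise (· ≤ ·)) ∧
  (∀ i, ∀ x ∈ T.row i, 1 ≤ x ∧ x ≤ n) ∧
  (∀ i j, T.inner i ≤ j → j < T.outer i → T.inner (i+1) ≤ j → j < T.outer (i+1) →
    T.entry i j < T.entry (i+1) j)

/-- Tableau insertion `T1 ⊠ T2`: concatenate corresponding rows and sort each row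
weakly increasingly; the skew boxes (inner shapes) add up and are pushed to the left,
i.e. treated as smaller than all numbered entries. -/
def ins (T1 T2 : SkewTab n) : SkewTab n where
  inner := fun i => T1.inner i + T2.inner i
  row := fun i => (T1.row i ++ T2.row i).mergeSort (fun a b => decide (a ≤ b))

/-- The empty tableau. -/
def empty : SkewTab n := ⟨fun _ => 0, fun _ => []⟩

/-- The weight of `T`: `wt T k` is the number of boxes with entry `k`. -/
noncomputable def wt (T : SkewTab n) (k : ℕ) : ℕ := ∑ᶠ i, (T.row i).count k

/-- The `c`-th column of `T` (0-indexed), viewed as a single-column skew tableau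
(keeping its skew boxes). -/
def col (T : SkewTab n) (c : ℕ) : SkewTab n where
  inner := fun i => if c < T.inner i then 1 else 0
  row := fun i =>
    if T.inner i ≤ c ∧ c < T.outer i then [(T.row i).getD (c - T.inner i) 0] else []

end SkewTab

/-- The set of SSYTs of shape `mu/nu` with entries in `{1,…,n}`. -/
def Tabs (n : ℕ) (mu nu : ℕ → ℕ) : Set (SkewTab n) :=
  {T | T.IsSSYT ∧ T.inner = nu ∧ T.outer = mu}

/-- The monomial `x^w = x₁^{w₁} ⋯ xₙ^{wₙ}`. -/
noncomputable def xpow (n : ℕ) (w : Fin n → ℕ) : MvPolynomial (Fin n) ℤ :=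
  ∏ k : Fin n, MvPolynomial.X k ^ w k

/-- The monomial `x^{w(T)}` attached to a tableau `T` (variable `x_k` corresponds to
the entry `k ∈ {1,…,n}`). -/
noncomputable def xwt {n : ℕ} (T : SkewTab n) : MvPolynomial (Fin n) ℤ :=
  xpow n (fun k => T.wt ((k : ℕ) + 1))

/-- The skew Schur polynomial `s_{mu/nu}(x₁,…,xₙ) = Σ_T x^{w(T)}`. -/
noncomputable def schur (n : ℕ) (mu nu : ℕ → ℕ) : MvPolynomial (Fin n) ℤ :=
  ∑ᶠ T ∈ Tabs n mu nu, xwt T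

/-- The Kostka number `K_{lam/mu,w}`: the number of SSYTs of shape `lam/mu` with
entries in `{1,…,n}` and weight `w`. -/
noncomputable def kostka (n : ℕ) (lam mu : ℕ → ℕ) (w : Fin n → ℕ) : ℕ :=
  Nat.card {T : SkewTab n // T ∈ Tabs n lam mu ∧ ∀ k : Fin n, T.wt ((k : ℕ) + 1) = w k}

/-- The monomial symmetric polynomial `m_w`: the sum of `x^u` over the distinct
rearrangements `u` of `w`. -/
noncomputable def mSym (n : ℕ) (w : Fin n → ℕ) : MvPolynomial (Fin n) ℤ :=
  ∑ᶠ u ∈ {u : Fin n → ℕ | ∃ σ : Equiv.Perm (Fin n), u = w ∘ σ}, xpow n u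

/-- The characteristic polynomial `χ(t) = ∏_{T ∈ T^n_{mu/nu}} (t − x^{w(T)})`. -/
noncomputable def charPoly (n : ℕ) (mu nu : ℕ → ℕ) : Polynomial (MvPolynomial (Fin n) ℤ) :=
  ∏ᶠ T ∈ Tabs n mu nu, (Polynomial.X - Polynomial.C (xwt T))

/-- `mu/nu` sits inside `alpha/beta`: there is an injection `f` of column positions such
that for every row, column `j` of `mu/nu` has a cell (resp. a skew box) exactly when
column `f j` of `alpha/beta` does; i.e. every column of the diagram of `mu/nu` can be
found among the columns of the diagram of `alpha/beta`, counting multiplicities. -/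
def SitsInside (mu nu alpha beta : ℕ → ℕ) : Prop :=
  ∃ f : ℕ → ℕ, Function.Injective f ∧
    ∀ j i, ((nu i ≤ j ∧ j < mu i) ↔ (beta i ≤ f j ∧ f j < alpha i)) ∧
      (j < nu i ↔ f j < beta i)

section InsertionAux

/-- number of entries `≤ x` in a list -/
def cnt (l : List ℕ) (x : ℕ) : ℕ := l.countP (fun a => decide (a ≤ x))

lemma getD_le_iff {l : List ℕ} (hl : l.Pairwise (· ≤ ·)) {p : ℕ} (hp : p < l.length) (x : ℕ) :
    l.getD p 0 ≤ x ↔ p < cnt l x := by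
  induction l generalizing p with
  | nil => simp at hp
  | cons a t ih =>
    rcases List.pairwise_cons.mp hl with ⟨ha, ht⟩
    cases p with
    | zero =>
      simp only [List.getD_cons_zero, cnt, List.countP_cons]
      constructor
      · intro h; simp [h]
      · intro h; by_contra hax
        have h0 : List.countP (fun a => decide (a ≤ x)) t = 0 :=
          List.countP_eq_zero.mpr (fun b hb => by
            simp only [decide_eq_true_eq]
            exact fun hbx => hax (le_trans (ha b hb) hbx))
        simp [h0, hax] at h
    | succ p =>
      have hp' : p < t.length := by simpa using hp
      simp only [List.getD_cons_succ]
      rw [ih ht hp']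
      simp only [cnt, List.countP_cons]
      by_cases hax : a ≤ x
      · simp [hax, Nat.succ_lt_succ_iff]
      · have h0 : List.countP (fun a => decide (a ≤ x)) t = 0 :=
          List.countP_eq_zero.mpr (fun b hb => by
            simp only [decide_eq_true_eq]
            exact fun hbx => hax (le_trans (ha b hb) hbx))
        simp [hax, h0]

/-- `inner i` plus the number of entries `≤ x` in row `i`. -/
def Ncnt {n : ℕ} (T : SkewTab n) (i x : ℕ) : ℕ := T.inner i + cnt (T.row i) x

lemma entry_le_iff {n : ℕ} (T : SkewTab n) (i j x : ℕ) (hs : (T.row i).Pairwise (· ≤ ·))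
    (h1 : T.inner i ≤ j) (h2 : j < T.outer i) :
    T.entry i j ≤ x ↔ j < Ncnt T i x := by
  have h2' : j < T.inner i + (T.row i).length := h2
  have hlen : j - T.inner i < (T.row i).length := by omega
  rw [SkewTab.entry, getD_le_iff hs hlen, Ncnt]
  omega

lemma N_mono {n : ℕ} (T : SkewTab n) (hT : T.IsSSYT) (i x : ℕ) (hx : 1 ≤ x) :
    Ncnt T (i+1) x ≤ Ncnt T i (x-1) := by
  obtain ⟨hi, ho, hs, hb, hc⟩ := hT
  have hinner : T.inner (i+1) ≤ T.inner i := hi.1 i (i+1) (Nat.le_succ i)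
  have houter : T.outer (i+1) ≤ T.outer i := ho.1 i (i+1) (Nat.le_succ i)
  by_cases hc0 : cnt (T.row (i+1)) x = 0
  · unfold Ncnt; rw [hc0]; omega
  · have hcl : cnt (T.row (i+1)) x ≤ (T.row (i+1)).length := List.countP_le_length
    obtain ⟨c, hc1'⟩ : ∃ c, cnt (T.row (i+1)) x = c + 1 :=
      ⟨_, (Nat.succ_pred_eq_of_pos (Nat.pos_of_ne_zero hc0)).symm⟩
    have hj1 : T.inner (i+1) ≤ T.inner (i+1) + c := Nat.le_add_right _ _
    have hj2 : T.inner (i+1) + c < T.outer (i+1) := by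
      show _ < T.inner (i+1) + (T.row (i+1)).length; omega
    have hentry : T.entry (i+1) (T.inner (i+1) + c) ≤ x := by
      rw [entry_le_iff T (i+1) _ x (hs (i+1)) hj1 hj2]; unfold Ncnt; omega
    by_cases hji : T.inner (i+1) + c < T.inner i
    · unfold Ncnt; omega
    · push_neg at hji
      have hj2' : T.inner (i+1) + c < T.outer i := lt_of_lt_of_le hj2 houter
      have hstr := hc i _ hji hj2' hj1 hj2
      have h2 : T.entry i (T.inner (i+1) + c) ≤ x - 1 := by omega
      rw [entry_le_iff T i _ (x-1) (hs i) hji hj2'] at h2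
      unfold Ncnt at h2 ⊢; omega

lemma sorted_msort (l : List ℕ) : (l.mergeSort (fun a b => decide (a ≤ b))).Pairwise (· ≤ ·) := by
  have h := List.pairwise_mergeSort (le := fun a b : ℕ => decide (a ≤ b))
    (fun a b c hab hbc => by simp only [decide_eq_true_eq] at *; omega)
    (fun a b => by simpa using Nat.le_total a b) l
  exact h.imp (by simp)

lemma IsPartition.add {f g : ℕ → ℕ} (hf : IsPartition f) (hg : IsPartition g) :
    IsPartition (fun i => f i + g i) := by
  refine ⟨fun i j h => Nat.add_le_add (hf.1 i j h) (hg.1 i j h), ?_⟩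
  obtain ⟨N, hN⟩ := hf.2
  obtain ⟨M, hM⟩ := hg.2
  exact ⟨max N M, fun i hi => by
    show f i + g i = 0
    rw [hN i (le_trans (le_max_left _ _) hi), hM i (le_trans (le_max_right _ _) hi)]⟩

lemma Ncnt_ins {n : ℕ} (T1 T2 : SkewTab n) (i x : ℕ) :
    Ncnt (T1.ins T2) i x = Ncnt T1 i x + Ncnt T2 i x := by
  unfold Ncnt SkewTab.ins cnt
  simp only
  rw [((T1.row i ++ T2.row i).mergeSort_perm _).countP_eq, List.countP_append]
  omega

lemma outer_ins {n : ℕ} (T1 T2 : SkewTab n) (i : ℕ) :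
    (T1.ins T2).outer i = T1.outer i + T2.outer i := by
  unfold SkewTab.outer SkewTab.ins
  simp only [List.length_mergeSort, List.length_append]
  omega

end InsertionAux

/-- The tableau insertion of an SSYT of shape `κ/λ` and an SSYT of
shape `μ/ν` is an SSYT of shape `(κ+μ)/(λ+ν)`. -/
theorem insertion_isSSYT (n : ℕ) (kappa lam mu nu : ℕ → ℕ)
    (hk : IsPartition kappa) (hl : IsPartition lam)
    (hm : IsPartition mu) (hn : IsPartition nu)
    (hlk : ∀ i, lam i ≤ kappa i) (hnm : ∀ i, nu i ≤ mu i)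
    (T1 T2 : SkewTab n) (hT1 : T1.IsSSYT) (hT2 : T2.IsSSYT)
    (h1i : T1.inner = lam) (h1o : T1.outer = kappa)
    (h2i : T2.inner = nu) (h2o : T2.outer = mu) :
    (T1.ins T2).IsSSYT ∧ (T1.ins T2).inner = (fun i => lam i + nu i) ∧
      (T1.ins T2).outer = (fun i => kappa i + mu i) := by
  subst h1i h1o h2i h2o
  obtain ⟨hi1, ho1, hs1, hb1, hc1⟩ := hT1
  obtain ⟨hi2, ho2, hs2, hb2, hc2⟩ := hT2
  have hinner : (T1.ins T2).inner = fun i => T1.inner i + T2.inner i := rfl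
  have houter : (T1.ins T2).outer = fun i => T1.outer i + T2.outer i :=
    funext (outer_ins T1 T2)
  have hsort : ∀ i, ((T1.ins T2).row i).Pairwise (· ≤ ·) := fun i => sorted_msort _
  have hbnd : ∀ i, ∀ x ∈ (T1.ins T2).row i, 1 ≤ x ∧ x ≤ n := by
    intro i x hx
    rw [show (T1.ins T2).row i = (T1.row i ++ T2.row i).mergeSort (fun a b => decide (a ≤ b)) from rfl,
      List.mem_mergeSort, List.mem_append] at hx
    rcases hx with h | h
    · exact hb1 i x h
    · exact hb2 i x h
  refine ⟨⟨hinner ▸ hl.add hn, houter ▸ hk.add hm, hsort, hbnd, ?_⟩, hinner, houter⟩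
  intro i j h1 h2 h3 h4
  set x := (T1.ins T2).entry (i+1) j with hxdef
  have hxmem : x ∈ (T1.ins T2).row (i+1) := by
    have h4' : j < (T1.ins T2).inner (i+1) + ((T1.ins T2).row (i+1)).length := h4
    have hlen : j - (T1.ins T2).inner (i+1) < ((T1.ins T2).row (i+1)).length := by omega
    rw [hxdef, SkewTab.entry, List.getD_eq_getElem _ _ hlen]
    exact List.getElem_mem hlen
  have hx1 : 1 ≤ x := (hbnd (i+1) x hxmem).1
  have hle : j < Ncnt (T1.ins T2) (i+1) x := by
    rw [← entry_le_iff (T1.ins T2) (i+1) j x (hsort (i+1)) h3 h4]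
  have hN1 := N_mono T1 ⟨hi1, ho1, hs1, hb1, hc1⟩ i x hx1
  have hN2 := N_mono T2 ⟨hi2, ho2, hs2, hb2, hc2⟩ i x hx1
  have hle2 : j < Ncnt (T1.ins T2) i (x-1) := by
    rw [Ncnt_ins] at hle ⊢; omega
  have hfin : (T1.ins T2).entry i j ≤ x - 1 :=
    (entry_le_iff (T1.ins T2) i j (x-1) (hsort i) h1 h2).mpr hle2
  omega
end

section
/- Every semi-standard Young tableau equals the insertion product of its columns: if T is an SSYT with columns C1, C2, ..., Ck (each viewed as a single-column SSYT), then T = C1 ⊠ C2 ⊠ ... ⊠ Ck. -/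
open scoped BigOperators

section Aux

variable {n : ℕ}

lemma foldr_ins_inner (L : List (SkewTab n)) (i : ℕ) :
    ((L.foldr SkewTab.ins SkewTab.empty).inner i) = (L.map fun C => C.inner i).sum := by
  induction L with
  | nil => simp [SkewTab.empty]
  | cons C L ih => simp [SkewTab.ins, ih]

lemma foldr_ins_row_perm (L : List (SkewTab n)) (i : ℕ) :
    ((L.foldr SkewTab.ins SkewTab.empty).row i).Perm (L.map fun C => C.row i).flatten := by
  induction L with
  | nil => simp [SkewTab.empty]
  | cons C L ih =>
    simp only [List.foldr_cons, List.map_cons, List.flatten_cons]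
    exact (List.mergeSort_perm _ _).trans (List.Perm.append_left _ ih)

lemma foldr_ins_row_sorted (L : List (SkewTab n)) (i : ℕ) :
    ((L.foldr SkewTab.ins SkewTab.empty).row i).Pairwise (· ≤ ·) := by
  cases L with
  | nil => simp [SkewTab.empty]
  | cons C L =>
    have h := List.pairwise_mergeSort (le := fun a b : ℕ => decide (a ≤ b))
      (by intro a b c hab hbc; simp only [decide_eq_true_eq] at *; omega)
      (by intro a b; simp only [Bool.or_eq_true, decide_eq_true_eq]; omega)
      (C.row i ++ (L.foldr SkewTab.ins SkewTab.empty).row i)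
    refine List.Pairwise.imp ?_ h
    intro a b hab; simpa using hab

lemma sum_indicator_range (d m : ℕ) :
    ((List.range m).map (fun c => if c < d then 1 else 0)).sum = min d m := by
  induction m with
  | zero => simp
  | succ m ih =>
    rw [List.range_succ, List.map_append, List.sum_append, ih]
    simp only [List.map_cons, List.map_nil, List.sum_cons, List.sum_nil]
    split <;> omega

lemma join_map_singleton (xs : List ℕ) (f : ℕ → List ℕ) (hf : ∀ x ∈ xs, ∃ y, f x = [y]) :
    True := trivial

lemma map_getD_range' (l : List ℕ) : ∀ d : ℕ,
    ((List.range' d l.length).map (fun c => l.getD (c - d) 0)) = l := by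
  induction l with
  | nil => simp
  | cons a l ih =>
    intro d
    rw [List.length_cons, List.range'_succ, List.map_cons]
    have h1 : (a :: l).getD (d - d) 0 = a := by simp
    rw [h1]
    congr 1
    have h2 : ∀ c ∈ List.range' (d + 1) l.length,
        (a :: l).getD (c - d) 0 = l.getD (c - (d + 1)) 0 := by
      intro c hc
      rw [List.mem_range'] at hc
      obtain ⟨hc1, _⟩ := hc
      have : c - d = (c - (d + 1)) + 1 := by omega
      rw [this, List.getD_cons_succ]
    rw [List.map_congr_left h2, ih (d + 1)]

lemma join_slices (l : List ℕ) (d m : ℕ) (hm : d + l.length ≤ m) :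
    ((List.range m).map
      (fun c => if d ≤ c ∧ c < d + l.length then [l.getD (c - d) 0] else [])).flatten = l := by
  set g : ℕ → List ℕ := fun c => if d ≤ c ∧ c < d + l.length then [l.getD (c - d) 0] else []
    with hg
  obtain ⟨k, hk⟩ : ∃ k, m = d + l.length + k := ⟨m - (d + l.length), by omega⟩
  have key : ∀ a b c : ℕ, List.range' a b ++ List.range' (a + b) c = List.range' a (b + c) :=
    fun a b c => by simpa [Nat.add_comm] using List.range'_append_1 a b c
  have hsplit : List.range m =
      (List.range' 0 d ++ List.range' d l.length) ++ List.range' (d + l.length) k := by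
    have e1 := key 0 d l.length
    simp only [Nat.zero_add] at e1
    rw [e1]
    have e2 := key 0 (d + l.length) k
    simp only [Nat.zero_add] at e2
    rw [e2, List.range_eq_range', hk]
  rw [hsplit]
  simp only [List.map_append, List.flatten_append]
  have h1 : ((List.range' 0 d).map g).flatten = [] := by
    rw [List.flatten_eq_nil_iff]
    intro s hs
    simp only [List.mem_map] at hs
    obtain ⟨c, hc, rfl⟩ := hs
    rw [List.mem_range'] at hc
    simp only [hg]
    rw [if_neg (by omega)]
  have h3 : ((List.range' (d + l.length) k).map g).flatten = [] := by
    rw [List.flatten_eq_nil_iff]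
    intro s hs
    simp only [List.mem_map] at hs
    obtain ⟨c, hc, rfl⟩ := hs
    rw [List.mem_range'] at hc
    simp only [hg]
    rw [if_neg (by omega)]
  have h2 : ((List.range' d l.length).map g).flatten = l := by
    have heq : ∀ c ∈ List.range' d l.length, g c = [l.getD (c - d) 0] := by
      intro c hc
      rw [List.mem_range'] at hc
      simp only [hg]
      rw [if_pos (by omega)]
    rw [List.map_congr_left heq]
    have : ((List.range' d l.length).map (fun c => [l.getD (c - d) 0])).flatten
        = (List.range' d l.length).map (fun c => l.getD (c - d) 0) := by
      generalize List.range' d l.length = xs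
      induction xs with
      | nil => simp
      | cons x xs ih => rw [List.map_cons, List.flatten_cons, List.map_cons, ih,
          List.singleton_append]
    rw [this, map_getD_range']
  rw [h1, h2, h3, List.nil_append, List.append_nil]

lemma col_outer_eq (T : SkewTab n) (c i : ℕ) :
    (T.col c).outer i = if c < T.outer i then 1 else 0 := by
  have hio : T.inner i ≤ T.outer i := Nat.le_add_right _ _
  simp only [SkewTab.outer, SkewTab.col, apply_ite List.length, List.length_singleton,
    List.length_nil]
  by_cases h1 : c < T.inner i <;> by_cases h2 : T.inner i ≤ c <;>
    by_cases h3 : c < T.inner i + (T.row i).length <;> simp [h1, h2, h3] <;> omega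

end Aux

/-- Every SSYT is the insertion product of its columns: each column is
itself a (single-column) SSYT, and `T = C₁ ⊠ C₂ ⊠ ⋯ ⊠ Cₖ`. -/
theorem eq_insProd_cols (n : ℕ) (T : SkewTab n) (hT : T.IsSSYT)
    (m : ℕ) (hm : ∀ i, T.outer i ≤ m) :
    (∀ c : ℕ, (T.col c).IsSSYT) ∧
      ((List.range m).map T.col).foldr SkewTab.ins SkewTab.empty = T := by
  obtain ⟨⟨hin_dec, Nin, hNin⟩, ⟨hout_dec, Nout, hNout⟩, hrows, hbd, hcol⟩ := hT
  constructor
  · -- each column is an SSYT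
    intro c
    refine ⟨⟨?_, Nin, ?_⟩, ⟨?_, Nout, ?_⟩, ?_, ?_, ?_⟩
    · intro i j hij
      have := hin_dec i j hij
      simp only [SkewTab.col]
      split_ifs <;> omega
    · intro i hi
      have := hNin i hi
      simp only [SkewTab.col]
      rw [if_neg (by omega)]
    · intro i j hij
      have := hout_dec i j hij
      rw [col_outer_eq, col_outer_eq]
      split_ifs <;> omega
    · intro i hi
      have := hNout i hi
      rw [col_outer_eq, if_neg (by omega)]
    · intro i
      simp only [SkewTab.col]
      split_ifs
      · exact List.pairwise_singleton _ _
      · exact List.Pairwise.nil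
    · intro i x hx
      simp only [SkewTab.col] at hx
      split_ifs at hx with h
      · simp only [List.mem_singleton] at hx
        subst hx
        have hlen : c - T.inner i < (T.row i).length := by
          have := h.2; simp only [SkewTab.outer] at this; omega
        rw [List.getD_eq_getElem _ _ hlen]
        exact hbd i _ (List.getElem_mem hlen)
      · simp at hx
    · intro i j h1 h2 h3 h4
      rw [col_outer_eq] at h2 h4
      have hio : T.inner i ≤ T.outer i := Nat.le_add_right _ _
      have hio' : T.inner (i+1) ≤ T.outer (i+1) := Nat.le_add_right _ _
      have hc2 : c < T.outer i := by by_contra h; rw [if_neg h] at h2; omega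
      have hc4 : c < T.outer (i+1) := by by_contra h; rw [if_neg h] at h4; omega
      rw [if_pos hc2] at h2
      rw [if_pos hc4] at h4
      have hj : j = 0 := by omega
      subst hj
      simp only [SkewTab.col] at h1 h3
      have hi1 : ¬ c < T.inner i := by by_contra h; rw [if_pos h] at h1; omega
      have hi3 : ¬ c < T.inner (i+1) := by by_contra h; rw [if_pos h] at h3; omega
      have he : ∀ r : ℕ, ¬ c < T.inner r → c < T.outer r →
          (T.col c).entry r 0 = T.entry r c := by
        intro r hr1 hr2
        simp only [SkewTab.entry, SkewTab.col]
        rw [if_neg hr1, if_pos ⟨by omega, hr2⟩]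
        simp
      rw [he i hi1 hc2, he (i+1) hi3 hc4]
      exact hcol i c (by omega) hc2 (by omega) hc4
  · -- the fold equals T
    have ext' : ∀ A B : SkewTab n, A.inner = B.inner → A.row = B.row → A = B := by
      intro A B h1 h2; cases A; cases B; cases h1; cases h2; rfl
    apply ext'
    · funext i
      rw [foldr_ins_inner, List.map_map]
      have : (List.range m).map ((fun C => C.inner i) ∘ T.col)
          = (List.range m).map (fun c => if c < T.inner i then 1 else 0) := by
        apply List.map_congr_left
        intro c _
        simp [SkewTab.col]
      rw [this, sum_indicator_range]
      have h1 : T.inner i ≤ m := le_trans (Nat.le_add_right _ _) (hm i)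
      omega
    · funext i
      have hperm := foldr_ins_row_perm ((List.range m).map T.col) i
      rw [List.map_map] at hperm
      have hmap : (List.range m).map ((fun C => C.row i) ∘ T.col)
          = (List.range m).map (fun c =>
              if T.inner i ≤ c ∧ c < T.inner i + (T.row i).length
              then [(T.row i).getD (c - T.inner i) 0] else []) := by
        apply List.map_congr_left
        intro c _
        rfl
      rw [hmap] at hperm
      rw [join_slices (T.row i) (T.inner i) m (by simpa [SkewTab.outer] using hm i)] at hperm
      exact List.Perm.eq_of_pairwise' (foldr_ins_row_sorted _ i) (hrows i) hperm
end

section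
/- For any two skew shapes κ/λ and μ/ν there exists a non-negative integer r such that μ/ν sits inside (κ + rμ)/(λ + rν); in fact any r > κ_1 works. -/
open scoped BigOperators

/-- For any skew shapes `κ/λ` and `μ/ν` there is `r ≥ 0` such that
`μ/ν` sits inside `(κ+rμ)/(λ+rν)`; in fact any `r > κ₁` works. -/
theorem exists_sitsInside (kappa lam mu nu : ℕ → ℕ)
    (hk : IsPartition kappa) (hl : IsPartition lam)
    (hm : IsPartition mu) (hn : IsPartition nu)
    (hlk : ∀ i, lam i ≤ kappa i) (hnm : ∀ i, nu i ≤ mu i) :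
    (∃ r : ℕ, SitsInside mu nu
        (fun i => kappa i + r * mu i) (fun i => lam i + r * nu i)) ∧
    (∀ r : ℕ, kappa 0 < r → SitsInside mu nu
        (fun i => kappa i + r * mu i) (fun i => lam i + r * nu i)) := by
  have key : ∀ r : ℕ, kappa 0 < r → SitsInside mu nu
      (fun i => kappa i + r * mu i) (fun i => lam i + r * nu i) := by
    intro r hr
    refine ⟨fun j => r * j + kappa 0, ?_, ?_⟩
    · intro a b hab
      simp only at hab
      have : r * a = r * b := by omega
      exact Nat.eq_of_mul_eq_mul_left (by omega) this
    · intro j i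
      simp only
      have hki : kappa i ≤ kappa 0 := hk.1 0 i (Nat.zero_le i)
      have hli : lam i ≤ kappa 0 := le_trans (hl.1 0 i (Nat.zero_le i)) (hlk 0)
      have e1 : r * (j + 1) = r * j + r := by ring
      have p1 : j < nu i → r * j + r ≤ r * nu i := fun h => e1 ▸ Nat.mul_le_mul_left r h
      have p2 : nu i ≤ j → r * nu i ≤ r * j := fun h => Nat.mul_le_mul_left r h
      have p3 : j < mu i → r * j + r ≤ r * mu i := fun h => e1 ▸ Nat.mul_le_mul_left r h
      have p4 : mu i ≤ j → r * mu i ≤ r * j := fun h => Nat.mul_le_mul_left r h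
      generalize r * j = A at p1 p2 p3 p4 ⊢
      generalize r * nu i = B at p1 p2 ⊢
      generalize r * mu i = C at p3 p4 ⊢
      omega
  exact ⟨⟨kappa 0 + 1, key (kappa 0 + 1) (Nat.lt_succ_self _)⟩, key⟩
end

section
/- For partitions μ ⊇ ν of length at most n, the sequence of skew Schur polynomials s_{kμ/kν}(x1,...,xn), k = 0, 1, 2, ..., satisfies the linear recurrence with characteristic polynomial χ(t) = ∏_{T ∈ T^n_{μ/ν}} (t − x^{w(T)}), the product over all SSYTs of shape μ/ν with entries in {1,...,n}. -/
open scoped BigOperators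

namespace StretchedSchur

open Finset

noncomputable section

/-- Entry-function model of fillings. -/
abbrev E := ℕ → ℕ → ℕ

/-- The cells of the skew diagram `a/b`. -/
def cell (a b : ℕ → ℕ) (i j : ℕ) : Prop := b i ≤ j ∧ j < a i

/-- Well-formed skew shape data. -/
def Shape (n : ℕ) (a b : ℕ → ℕ) : Prop :=
  IsPartition a ∧ IsPartition b ∧ (∀ i, b i ≤ a i) ∧ (∀ i, n ≤ i → a i = 0)

/-- Function-based SSYT of shape `a/b` with entries in `{1,…,n}`, normalized to be `0`
outside the diagram. -/
def SSYTF (n : ℕ) (a b : ℕ → ℕ) : Set E :=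
  {e | (∀ i j, cell a b i j → 1 ≤ e i j ∧ e i j ≤ n)
     ∧ (∀ i j, cell a b i j → cell a b i (j+1) → e i j ≤ e i (j+1))
     ∧ (∀ i j, cell a b i j → cell a b (i+1) j → e i j < e (i+1) j)
     ∧ (∀ i j, ¬ cell a b i j → e i j = 0)}

/-- The variable attached to an entry value. -/
def xv (n : ℕ) (v : ℕ) : MvPolynomial (Fin n) ℤ :=
  if h : v - 1 < n then MvPolynomial.X ⟨v-1, h⟩ else 1

/-- The weight monomial of an entry function. -/
def wtm (n : ℕ) (a b : ℕ → ℕ) (e : E) : MvPolynomial (Fin n) ℤ :=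
  ∏ i ∈ Finset.range n, ∏ j ∈ Finset.Ico (b i) (a i), xv n (e i j)

section Shape

variable {n : ℕ} {a b : ℕ → ℕ}

lemma Shape.cell_row_lt (h : Shape n a b) {i j : ℕ} (hc : cell a b i j) : i < n := by
  by_contra hi
  have h0 := h.2.2.2 i (le_of_not_gt hi)
  have h2 := hc.2
  omega

lemma Shape.cell_lt (h : Shape n a b) {i j : ℕ} (hc : cell a b i j) : j < a 0 :=
  lt_of_lt_of_le hc.2 (h.1.1 0 i (Nat.zero_le i))

lemma cell_between {i j j' j'' : ℕ} (hc : cell a b i j) (hc' : cell a b i j')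
    (h1 : j ≤ j'') (h2 : j'' ≤ j') : cell a b i j'' :=
  ⟨le_trans hc.1 h1, lt_of_le_of_lt h2 hc'.2⟩

lemma cell_between_row (h : Shape n a b) {r i i' j : ℕ} (hc : cell a b r j) (hc' : cell a b i j)
    (h1 : r ≤ i') (h2 : i' ≤ i) : cell a b i' j :=
  ⟨le_trans (h.2.1.1 r i' h1) hc.1, lt_of_lt_of_le hc'.2 (h.1.1 i' i h2)⟩

lemma rowchain {e : E} (he : e ∈ SSYTF n a b) {i j j' : ℕ}
    (hc : cell a b i j) (hc' : cell a b i j') (hle : j ≤ j') : e i j ≤ e i j' := by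
  obtain ⟨k, rfl⟩ : ∃ k, j' = j + k := ⟨j' - j, by omega⟩
  clear hle
  induction k with
  | zero => exact le_refl _
  | succ k ih =>
    have hck : cell a b i (j + k) := cell_between hc hc' (Nat.le_add_right _ _) (by omega)
    exact le_trans (ih hck) (he.2.1 i (j + k) hck hc')

lemma colchain {e : E} (he : e ∈ SSYTF n a b) (h : Shape n a b) {r i j : ℕ}
    (hc : cell a b r j) (hc' : cell a b i j) (hle : r ≤ i) : e r j + (i - r) ≤ e i j := by
  obtain ⟨k, rfl⟩ : ∃ k, i = r + k := ⟨i - r, by omega⟩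
  clear hle
  induction k with
  | zero => simp
  | succ k ih =>
    have hck : cell a b (r + k) j := cell_between_row h hc hc' (Nat.le_add_right _ _) (by omega)
    have h1 := he.2.2.1 (r + k) j hck hc'
    have h2 := ih hck
    show e r j + (r + (k + 1) - r) ≤ e (r + k + 1) j
    omega

lemma entry_pos {e : E} (he : e ∈ SSYTF n a b) (h : Shape n a b) {i j : ℕ}
    (hc : cell a b i j) : ∀ r, cell a b r j → r ≤ i → r + 1 ≤ e i j + r := by
  intro r hr hri
  have h1 := (he.1 r j hr).1
  have := colchain he h hr hc hri
  omega

end Shape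

end

end StretchedSchur
namespace StretchedSchur

open Finset

noncomputable section

instance celldec (a b : ℕ → ℕ) (i j : ℕ) : Decidable (cell a b i j) := by
  unfold cell; infer_instance

lemma getD_map_range (f : ℕ → ℕ) (L t : ℕ) :
    ((List.range L).map f).getD t 0 = if t < L then f t else 0 := by
  by_cases h : t < L
  · rw [List.getD_eq_get _ _ (⟨t, by simpa using h⟩ : Fin ((List.range L).map f).length)]
    simp [h]
  · rw [List.getD_eq_default _ _ (by simpa using le_of_not_gt h)]
    simp [h]

lemma count_eq_sum (v : ℕ) (l : List ℕ) :
    l.count v = ∑ t ∈ Finset.range l.length, (if l.getD t 0 = v then 1 else 0) := by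
  induction l with
  | nil => simp
  | cons x l ih =>
    rw [List.length_cons, Finset.sum_range_succ']
    simp only [List.getD_cons_succ, List.getD_cons_zero]
    rw [List.count_cons, ih]
    by_cases hx : x = v <;> simp [hx, add_comm]

lemma sorted_getD {l : List ℕ} (hs : l.Pairwise (· ≤ ·)) {t t' : ℕ} (h1 : t ≤ t')
    (h2 : t' < l.length) : l.getD t 0 ≤ l.getD t' 0 := by
  rw [List.getD_eq_get _ _ ⟨t, lt_of_le_of_lt h1 h2⟩, List.getD_eq_get _ _ ⟨t', h2⟩]
  exact hs.rel_get_of_le (by simpa using h1)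

lemma getD_mem {l : List ℕ} {t : ℕ} (h : t < l.length) : l.getD t 0 ∈ l := by
  rw [List.getD_eq_get _ _ ⟨t, h⟩]
  exact l.get_mem _

lemma skewtab_ext {n : ℕ} {T T' : SkewTab n} (h1 : T.inner = T'.inner)
    (h2 : T.row = T'.row) : T = T' := by
  cases T; cases T'; cases h1; cases h2; rfl

variable {n : ℕ} {a b : ℕ → ℕ}

/-- From list-based tableaux to entry functions. -/
def toE (a b : ℕ → ℕ) {n : ℕ} (T : SkewTab n) : E :=
  fun i j => if cell a b i j then T.entry i j else 0

/-- From entry functions to list-based tableaux. -/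
def ofE (n : ℕ) (a b : ℕ → ℕ) (e : E) : SkewTab n :=
  ⟨b, fun i => (List.range (a i - b i)).map fun t => e i (b i + t)⟩

lemma toE_cell {T : SkewTab n} {i j : ℕ} (hc : cell a b i j) :
    toE a b T i j = T.entry i j := if_pos hc

lemma Tabs_rowlen {T : SkewTab n} (hT : T ∈ Tabs n a b) (i : ℕ) :
    (T.row i).length = a i - b i := by
  have h1 : T.inner i + (T.row i).length = a i := congrFun hT.2.2 i
  have h2 : T.inner i = b i := congrFun hT.2.1 i
  omega

lemma Tabs_entry {T : SkewTab n} (hT : T ∈ Tabs n a b) {i j : ℕ} :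
    T.entry i j = (T.row i).getD (j - b i) 0 := by
  rw [SkewTab.entry, hT.2.1]

lemma toE_mem (h : Shape n a b) {T : SkewTab n} (hT : T ∈ Tabs n a b) :
    toE a b T ∈ SSYTF n a b := by
  have hlen := Tabs_rowlen hT
  obtain ⟨hS, hin, hout⟩ := hT
  have hT' : T ∈ Tabs n a b := ⟨hS, hin, hout⟩
  refine ⟨?_, ?_, ?_, ?_⟩
  · intro i j hc
    rw [toE_cell hc, Tabs_entry hT']
    have hidx : j - b i < (T.row i).length := by
      rw [hlen]; have := hc.1; have := hc.2; omega
    exact hS.2.2.2.1 i _ (getD_mem hidx)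
  · intro i j hc hc'
    rw [toE_cell hc, toE_cell hc', Tabs_entry hT', Tabs_entry hT']
    refine sorted_getD (hS.2.2.1 i) ?_ ?_
    · have := hc.1; omega
    · rw [hlen]; have := hc'.1; have := hc'.2; omega
  · intro i j hc hc'
    rw [toE_cell hc, toE_cell hc']
    refine hS.2.2.2.2 i j ?_ ?_ ?_ ?_
    · rw [hin]; exact hc.1
    · rw [hout]; exact hc.2
    · rw [hin]; exact hc'.1
    · rw [hout]; exact hc'.2
  · intro i j hc
    exact if_neg hc

lemma ofE_outer (h : Shape n a b) (e : E) : (ofE n a b e).outer = a := by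
  funext i
  have := h.2.2.1 i
  simp only [SkewTab.outer, ofE, List.length_map, List.length_range]
  omega

lemma ofE_entry (e : E) {i j : ℕ} (hc : cell a b i j) :
    (ofE n a b e).entry i j = e i j := by
  have h1 := hc.1
  have h2 := hc.2
  show ((List.range (a i - b i)).map fun t => e i (b i + t)).getD (j - b i) 0 = e i j
  rw [getD_map_range, if_pos (by omega)]
  congr 1
  omega

lemma ofE_mem (h : Shape n a b) {e : E} (he : e ∈ SSYTF n a b) :
    ofE n a b e ∈ Tabs n a b := by
  have hout := ofE_outer h e
  refine ⟨⟨h.2.1, (by rw [hout]; exact h.1), ?_, ?_, ?_⟩, rfl, hout⟩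
  · intro i
    rw [List.pairwise_iff_get]
    intro t t' htt'
    simp only [ofE, List.get_eq_getElem, List.getElem_map, List.getElem_range]
    have ht : (t : ℕ) < a i - b i := by
      have := t.2; simpa [ofE] using this
    have ht' : (t' : ℕ) < a i - b i := by
      have := t'.2; simpa [ofE] using this
    have hc : cell a b i (b i + t) := ⟨by omega, by omega⟩
    have hc' : cell a b i (b i + t') := ⟨by omega, by omega⟩
    show ((ofE n a b e).row i).get t ≤ ((ofE n a b e).row i).get t'
    rw [List.get_eq_getElem, List.get_eq_getElem]
    simpa [ofE] using rowchain he hc hc' (by omega)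
  · intro i x hx
    simp only [ofE, List.mem_map, List.mem_range] at hx
    obtain ⟨t, ht, rfl⟩ := hx
    exact he.1 i (b i + t) ⟨by omega, by omega⟩
  · intro i j h1 h2 h3 h4
    rw [hout] at h2 h4
    have hb : (ofE n a b e).inner = b := rfl
    rw [hb] at h1 h3
    have hc : cell a b i j := ⟨h1, h2⟩
    have hc' : cell a b (i+1) j := ⟨h3, h4⟩
    rw [ofE_entry e hc, ofE_entry e hc']
    exact he.2.2.1 i j hc hc'

lemma toE_ofE (h : Shape n a b) {e : E} (he : e ∈ SSYTF n a b) :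
    toE a b (ofE n a b e) = e := by
  funext i j
  by_cases hc : cell a b i j
  · rw [toE_cell hc, ofE_entry e hc]
  · rw [show toE a b (ofE n a b e) i j = 0 from if_neg hc, (he.2.2.2 i j hc).symm]

lemma toE_injOn (h : Shape n a b) : Set.InjOn (fun T => toE a b T) (Tabs n a b) := by
  intro T hT T' hT' heq
  refine skewtab_ext (by rw [hT.2.1, hT'.2.1]) ?_
  funext i
  refine List.ext_get (by rw [Tabs_rowlen hT, Tabs_rowlen hT']) ?_
  intro t h1 h2
  have hlen : t < a i - b i := by rw [← Tabs_rowlen hT i]; exact h1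
  have hc : cell a b i (b i + t) := ⟨by omega, by omega⟩
  have e1 := congrFun (congrFun heq i) (b i + t)
  simp only [toE_cell hc] at e1
  rw [Tabs_entry hT, Tabs_entry hT'] at e1
  have hbt : b i + t - b i = t := by omega
  rw [hbt, List.getD_eq_get _ _ ⟨t, h1⟩, List.getD_eq_get _ _ ⟨t, h2⟩] at e1
  exact e1

lemma bridge_bijOn (h : Shape n a b) :
    Set.BijOn (fun T => toE a b T) (Tabs n a b) (SSYTF n a b) :=
  ⟨fun _ hT => toE_mem h hT, toE_injOn h,
    fun e he => ⟨ofE n a b e, ofE_mem h he, toE_ofE h he⟩⟩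

end

end StretchedSchur
namespace StretchedSchur

open Finset

noncomputable section

variable {n : ℕ} {a b : ℕ → ℕ}

lemma SSYTF_finite (h : Shape n a b) : (SSYTF n a b).Finite := by
  rw [← Set.finite_coe_iff]
  let f : SSYTF n a b → (Fin n × Fin (a 0) → Fin (n+1)) := fun e p =>
    ⟨min (e.1 p.1 p.2) n, by omega⟩
  have hinj : Function.Injective f := by
    intro e e' heq
    apply Subtype.ext
    funext i j
    by_cases hc : cell a b i j
    · have hi : i < n := h.cell_row_lt hc
      have hj : j < a 0 := h.cell_lt hc
      have := congrFun heq ⟨⟨i, hi⟩, ⟨j, hj⟩⟩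
      have hv := (e.2.1 i j hc).2
      have hv' := (e'.2.1 i j hc).2
      simp only [f, Fin.mk.injEq] at this
      omega
    · rw [e.2.2.2.2 i j hc, e'.2.2.2.2 i j hc]
  exact Finite.of_injective f hinj

lemma wt_eq (h : Shape n a b) {T : SkewTab n} (hT : T ∈ Tabs n a b) (v : ℕ) :
    T.wt v = ∑ i ∈ Finset.range n, ∑ j ∈ Finset.Ico (b i) (a i),
      (if toE a b T i j = v then 1 else 0) := by
  rw [SkewTab.wt]
  rw [finsum_eq_finset_sum_of_support_subset _ (s := Finset.range n) ?sub]
  case sub =>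
    intro i hi
    simp only [Function.mem_support] at hi
    simp only [Finset.coe_range, Set.mem_Iio]
    by_contra hn
    have h0 : a i = 0 := h.2.2.2 i (le_of_not_gt hn)
    have hrl := Tabs_rowlen hT i
    rw [h0] at hrl
    have : (T.row i).length = 0 := by omega
    rw [List.length_eq_zero_iff.mp this] at hi
    simp at hi
  refine Finset.sum_congr rfl fun i _ => ?_
  rw [count_eq_sum, Tabs_rowlen hT i, Finset.sum_Ico_eq_sum_range]
  refine Finset.sum_congr rfl fun t ht => ?_
  rw [Finset.mem_range] at ht
  have hc : cell a b i (b i + t) := ⟨by omega, by omega⟩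
  rw [toE_cell hc, Tabs_entry hT]
  have hbt : b i + t - b i = t := by omega
  rw [hbt]

lemma xv_prod {n v : ℕ} (h1 : 1 ≤ v) (h2 : v ≤ n) :
    (∏ k : Fin n, MvPolynomial.X (R := ℤ) k ^ (if v = (k : ℕ) + 1 then 1 else 0)) = xv n v := by
  rw [xv, dif_pos (by omega : v - 1 < n)]
  rw [Finset.prod_eq_single (⟨v-1, by omega⟩ : Fin n)]
  · rw [if_pos (by simp; omega), pow_one]
  · intro k _ hk
    rw [if_neg, pow_zero]
    intro hv
    apply hk
    apply Fin.ext
    simp only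
    omega
  · simp

lemma xwt_eq (h : Shape n a b) {T : SkewTab n} (hT : T ∈ Tabs n a b) :
    xwt T = wtm n a b (toE a b T) := by
  have he := toE_mem h hT
  rw [xwt, xpow, wtm]
  calc ∏ k : Fin n, MvPolynomial.X (R := ℤ) k ^ T.wt ((k : ℕ) + 1)
      = ∏ k : Fin n, ∏ i ∈ Finset.range n, ∏ j ∈ Finset.Ico (b i) (a i),
          MvPolynomial.X (R := ℤ) k ^ (if toE a b T i j = (k : ℕ) + 1 then 1 else 0) := by
        refine Finset.prod_congr rfl fun k _ => ?_
        rw [wt_eq h hT ((k : ℕ) + 1), ← Finset.prod_pow_eq_pow_sum]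
        exact Finset.prod_congr rfl fun i _ => (Finset.prod_pow_eq_pow_sum _ _ _).symm
    _ = ∏ i ∈ Finset.range n, ∏ j ∈ Finset.Ico (b i) (a i), ∏ k : Fin n,
          MvPolynomial.X (R := ℤ) k ^ (if toE a b T i j = (k : ℕ) + 1 then 1 else 0) := by
        rw [Finset.prod_comm]
        exact Finset.prod_congr rfl fun i _ => Finset.prod_comm
    _ = ∏ i ∈ Finset.range n, ∏ j ∈ Finset.Ico (b i) (a i), xv n (toE a b T i j) := by
        refine Finset.prod_congr rfl fun i _ => Finset.prod_congr rfl fun j hj => ?_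
        rw [Finset.mem_Ico] at hj
        have hc : cell a b i j := ⟨hj.1, hj.2⟩
        exact xv_prod (he.1 i j hc).1 (he.1 i j hc).2

lemma schur_eq (h : Shape n a b) :
    schur n a b = ∑ e ∈ (SSYTF_finite h).toFinset, wtm n a b e := by
  rw [schur, finsum_mem_eq_of_bijOn _ (bridge_bijOn h) (fun T hT => xwt_eq h hT),
    ← finsum_mem_coe_finset, Set.Finite.coe_toFinset]

lemma charPoly_eq (h : Shape n a b) :
    charPoly n a b = ∏ e ∈ (SSYTF_finite h).toFinset,
      (Polynomial.X - Polynomial.C (wtm n a b e)) := by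
  rw [charPoly, finprod_mem_eq_of_bijOn
      (g := fun e => Polynomial.X - Polynomial.C (wtm n a b e)) _ (bridge_bijOn h)
      (fun T hT => by rw [xwt_eq h hT]),
    ← finprod_mem_coe_finset, Set.Finite.coe_toFinset]

end

end StretchedSchur
namespace StretchedSchur

open Finset Polynomial

open scoped Classical

noncomputable section

/-- Pointwise order on entry functions. -/
def led (e f : E) : Prop := ∀ i j, e i j ≤ f i j

/-- Horizontal compatibility: column `j` of `g` can stand to the left of column `j+1`
of `f`. -/
def rel (μ ν : ℕ → ℕ) (g f : E) : Prop :=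
  ∀ i j, cell μ ν i j → cell μ ν i (j+1) → g i j ≤ f i (j+1)

lemma led_refl (e : E) : led e e := fun _ _ => le_refl _

lemma led_trans {e f g : E} (h1 : led e f) (h2 : led f g) : led e g :=
  fun i j => le_trans (h1 i j) (h2 i j)

section Fixed

variable (n : ℕ) (μ ν : ℕ → ℕ)

/-- The index type: SSYTs of shape `μ/ν` in the function model. -/
abbrev JT := ↥(SSYTF n μ ν)

lemma JT_ext {F G : JT n μ ν} (h1 : led F.1 G.1) (h2 : led G.1 F.1) : F = G :=
  Subtype.ext (funext fun i => funext fun j => le_antisymm (h1 i j) (h2 i j))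

/-- The weight monomial of an index. -/
def dw (F : JT n μ ν) : MvPolynomial (Fin n) ℤ := wtm n μ ν F.1

/-- The transfer matrix. -/
def NM : Matrix (JT n μ ν) (JT n μ ν) (MvPolynomial (Fin n) ℤ) :=
  Matrix.of fun F G => if led F.1 G.1 then dw n μ ν G else 0

/-- The boundary-coupling matrix. -/
def CM : Matrix (JT n μ ν) (JT n μ ν) (MvPolynomial (Fin n) ℤ) :=
  Matrix.of fun G F => if rel μ ν G.1 F.1 then dw n μ ν F else 0

lemma NM_apply (F G : JT n μ ν) : NM n μ ν F G = if led F.1 G.1 then dw n μ ν G else 0 := rfl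

lemma CM_apply (G F : JT n μ ν) : CM n μ ν G F = if rel μ ν G.1 F.1 then dw n μ ν F else 0 := rfl

variable [Fintype (JT n μ ν)]

lemma NM_pow_supp : ∀ (m : ℕ) (F G : JT n μ ν), ¬ led F.1 G.1 → (NM n μ ν ^ m) F G = 0 := by
  intro m
  induction m with
  | zero =>
    intro F G hFG
    have hne : F ≠ G := by rintro rfl; exact hFG (led_refl _)
    rw [pow_zero, Matrix.one_apply_ne hne]
  | succ m ih =>
    intro F G hFG
    rw [pow_succ, Matrix.mul_apply]
    apply Finset.sum_eq_zero
    intro H _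
    by_cases h1 : led F.1 H.1
    · have h2 : ¬ led H.1 G.1 := fun h2 => hFG (led_trans h1 h2)
      rw [NM_apply, if_neg h2, mul_zero]
    · rw [ih F H h1, zero_mul]

lemma aeval_supp (p : Polynomial (MvPolynomial (Fin n) ℤ)) (F G : JT n μ ν)
    (hFG : ¬ led F.1 G.1) : (aeval (NM n μ ν) p) F G = 0 := by
  induction p using Polynomial.induction_on' with
  | add p q hp hq => rw [map_add, Matrix.add_apply, hp, hq, add_zero]
  | monomial k c =>
    rw [aeval_monomial, Matrix.algebraMap_eq_diagonal, Matrix.diagonal_mul]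
    rw [NM_pow_supp n μ ν k F G hFG, mul_zero]

lemma keyvanish : ∀ (s : Finset (JT n μ ν)) (F G : JT n μ ν),
    (∀ H, led F.1 H.1 → led H.1 G.1 → H ∈ s) →
    (aeval (NM n μ ν) (∏ H ∈ s, (X - C (dw n μ ν H)))) F G = 0 := by
  intro s
  induction s using Finset.strongInduction with
  | _ s ih =>
    intro F G hs
    by_cases hFG : led F.1 G.1
    · have hG : G ∈ s := hs G hFG (led_refl _)
      rw [← Finset.prod_erase_mul s _ hG, map_mul, Matrix.mul_apply]
      apply Finset.sum_eq_zero
      intro H _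
      by_cases h1 : led F.1 H.1
      · have hfac : (aeval (NM n μ ν) (X - C (dw n μ ν G))) H G
            = (if led H.1 G.1 then dw n μ ν G else 0) - (if H = G then dw n μ ν G else 0) := by
          rw [map_sub, aeval_X, aeval_C, Matrix.sub_apply, NM_apply,
            Matrix.algebraMap_matrix_apply]
          simp only [Algebra.algebraMap_self_apply]
        by_cases h2 : led H.1 G.1
        · by_cases h3 : H = G
          · subst h3
            rw [hfac, if_pos (led_refl _), if_pos rfl, sub_self, mul_zero]
          · have hA : (aeval (NM n μ ν) (∏ K ∈ s.erase G, (X - C (dw n μ ν K)))) F H = 0 := by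
              refine ih (s.erase G) (Finset.erase_ssubset hG) F H (fun K hK1 hK2 => ?_)
              refine Finset.mem_erase.mpr ⟨?_, hs K hK1 (led_trans hK2 h2)⟩
              rintro rfl
              exact h3 (JT_ext n μ ν h2 hK2)
            rw [hA, zero_mul]
        · have h3 : H ≠ G := by rintro rfl; exact h2 (led_refl _)
          rw [hfac, if_neg h2, if_neg h3, sub_self, mul_zero]
      · rw [aeval_supp n μ ν _ F H h1, zero_mul]
    · exact aeval_supp n μ ν _ F G hFG

/-- Cayley–Hamilton for the triangular transfer matrix. -/
lemma chN : aeval (NM n μ ν) (∏ H : JT n μ ν, (X - C (dw n μ ν H))) = 0 := by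
  refine Matrix.ext fun F G => ?_
  rw [Matrix.zero_apply]
  exact keyvanish n μ ν Finset.univ F G (fun H _ _ => Finset.mem_univ H)

end Fixed

end

end StretchedSchur
namespace StretchedSchur

open Finset Polynomial

open scoped Classical

noncomputable section

section Fixed

variable (n : ℕ) (μ ν : ℕ → ℕ) [Fintype (JT n μ ν)]

/-- Weakly increasing sequences of `m+1` tableaux ending at `G`. -/
def SCh (m : ℕ) (G : JT n μ ν) : Finset (Fin (m+1) → JT n μ ν) :=
  Finset.univ.filter (fun c => (∀ t : Fin m, led (c t.castSucc).1 (c t.succ).1) ∧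
    c (Fin.last m) = G)

/-- Weakly increasing sequences whose last entry is horizontally compatible
with the first. -/
def Chains (m : ℕ) : Finset (Fin (m+1) → JT n μ ν) :=
  Finset.univ.filter (fun c => (∀ t : Fin m, led (c t.castSucc).1 (c t.succ).1) ∧
    rel μ ν (c (Fin.last m)).1 (c 0).1)

lemma powN : ∀ (m : ℕ) (F G : JT n μ ν),
    (NM n μ ν ^ m) F G = ∑ c ∈ (SCh n μ ν m G).filter (fun c => c 0 = F),
      ∏ t : Fin m, dw n μ ν (c t.succ) := by
  intro m
  induction m with
  | zero =>
    intro F G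
    rw [pow_zero, Matrix.one_apply]
    have hlast : (Fin.last 0) = (0 : Fin 1) := rfl
    by_cases hFG : F = G
    · subst hFG
      rw [if_pos rfl]
      have hset : (SCh n μ ν 0 F).filter (fun c => c 0 = F) = {fun _ => F} := by
        ext c
        simp only [SCh, Finset.mem_filter, Finset.mem_univ, true_and, Finset.mem_singleton,
          hlast]
        constructor
        · rintro ⟨⟨-, h0⟩, -⟩
          funext t
          have ht : t = 0 := by
            apply Fin.ext
            have := t.2
            simp only [Fin.val_zero]
            omega
          rw [ht, h0]
        · rintro rfl
          exact ⟨⟨fun t => t.elim0, rfl⟩, rfl⟩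
      rw [hset, Finset.sum_singleton]
      simp
    · rw [if_neg hFG]
      symm
      apply Finset.sum_eq_zero
      intro c hc
      rcases Finset.mem_filter.mp hc with ⟨hsch, h0⟩
      rcases Finset.mem_filter.mp hsch with ⟨-, -, hlastG⟩
      exfalso
      apply hFG
      rw [← h0, ← hlastG, hlast]
  | succ m ih =>
    intro F G
    rw [pow_succ', Matrix.mul_apply]
    calc (∑ H : JT n μ ν, NM n μ ν F H * (NM n μ ν ^ m) H G)
        = ∑ H : JT n μ ν, ∑ c ∈ (SCh n μ ν m G).filter (fun c => c 0 = H),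
            (if led F.1 (c 0).1 then dw n μ ν (c 0) * ∏ t : Fin m, dw n μ ν (c t.succ)
              else 0) := by
          refine Finset.sum_congr rfl fun H _ => ?_
          rw [NM_apply, ih H G]
          by_cases hFH : led F.1 H.1
          · rw [if_pos hFH, Finset.mul_sum]
            refine Finset.sum_congr rfl fun c hc => ?_
            have hc0 : c 0 = H := (Finset.mem_filter.mp hc).2
            rw [hc0, if_pos hFH]
          · rw [if_neg hFH, zero_mul]
            symm
            apply Finset.sum_eq_zero
            intro c hc
            have hc0 : c 0 = H := (Finset.mem_filter.mp hc).2
            rw [hc0, if_neg hFH]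
      _ = ∑ c ∈ SCh n μ ν m G,
            (if led F.1 (c 0).1 then dw n μ ν (c 0) * ∏ t : Fin m, dw n μ ν (c t.succ)
              else 0) :=
          Finset.sum_fiberwise_of_maps_to (fun c _ => Finset.mem_univ _) _
      _ = ∑ c ∈ (SCh n μ ν m G).filter (fun c => led F.1 (c 0).1),
            dw n μ ν (c 0) * ∏ t : Fin m, dw n μ ν (c t.succ) :=
          (Finset.sum_filter _ _).symm
      _ = ∑ c ∈ (SCh n μ ν (m+1) G).filter (fun c => c 0 = F),
            ∏ t : Fin (m+1), dw n μ ν (c t.succ) := by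
          refine Finset.sum_nbij' (fun c => Fin.cons F c) (fun c => Fin.tail c)
            ?_ ?_ ?_ ?_ ?_
          · intro c hc
            simp only [Finset.mem_filter, Finset.mem_univ, true_and, SCh] at hc ⊢
            obtain ⟨⟨hmono, hlastG⟩, hled⟩ := hc
            refine ⟨⟨?_, ?_⟩, Fin.cons_zero _ _⟩
            · intro t
              refine Fin.cases ?_ ?_ t
              · rw [Fin.castSucc_zero, Fin.cons_zero, Fin.cons_succ]
                exact hled
              · intro t'
                rw [← Fin.succ_castSucc, Fin.cons_succ, Fin.cons_succ]
                exact hmono t'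
            · rw [← Fin.succ_last, Fin.cons_succ]
              exact hlastG
          · intro c hc
            simp only [Finset.mem_filter, Finset.mem_univ, true_and, SCh] at hc ⊢
            obtain ⟨⟨hmono, hlastG⟩, h0⟩ := hc
            refine ⟨⟨?_, ?_⟩, ?_⟩
            · intro t
              have h := hmono t.succ
              rwa [← Fin.succ_castSucc] at h
            · show c (Fin.last m).succ = G
              rw [Fin.succ_last]
              exact hlastG
            · show led F.1 (c (0 : Fin (m+1)).succ).1
              have h := hmono 0
              rwa [Fin.castSucc_zero, h0] at h
          · intro c _
            exact Fin.tail_cons _ _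
          · intro c hc
            have h0 : c 0 = F := (Finset.mem_filter.mp hc).2
            show Fin.cons F (Fin.tail c) = c
            rw [← h0]
            exact Fin.cons_self_tail c
          · intro c _
            have hcs : ∀ t : Fin (m+1), (Fin.cons F c : Fin (m+2) → JT n μ ν) t.succ = c t :=
              fun t => Fin.cons_succ _ _ _
            calc dw n μ ν (c 0) * ∏ t : Fin m, dw n μ ν (c t.succ)
                = ∏ t : Fin (m+1), dw n μ ν (c t) := by rw [Fin.prod_univ_succ]
              _ = ∏ t : Fin (m+1), dw n μ ν ((Fin.cons F c : Fin (m+2) → JT n μ ν) t.succ) :=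
                  Finset.prod_congr rfl fun t _ => by rw [hcs t]

lemma trace_eq (m : ℕ) :
    Matrix.trace (CM n μ ν * NM n μ ν ^ m)
      = ∑ c ∈ Chains n μ ν m, ∏ t : Fin (m+1), dw n μ ν (c t) := by
  rw [Matrix.trace]
  calc ∑ G, (CM n μ ν * NM n μ ν ^ m).diag G
      = ∑ G : JT n μ ν, ∑ c ∈ (Chains n μ ν m).filter (fun c => c (Fin.last m) = G),
          ∏ t : Fin (m+1), dw n μ ν (c t) := by
        refine Finset.sum_congr rfl fun G _ => ?_
        rw [Matrix.diag, Matrix.mul_apply]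
        calc ∑ F : JT n μ ν, CM n μ ν G F * (NM n μ ν ^ m) F G
            = ∑ F : JT n μ ν, ∑ c ∈ (SCh n μ ν m G).filter (fun c => c 0 = F),
                (if rel μ ν G.1 (c 0).1 then dw n μ ν (c 0) * ∏ t : Fin m, dw n μ ν (c t.succ)
                  else 0) := by
              refine Finset.sum_congr rfl fun F _ => ?_
              rw [CM_apply, powN n μ ν m F G]
              by_cases hGF : rel μ ν G.1 F.1
              · rw [if_pos hGF, Finset.mul_sum]
                refine Finset.sum_congr rfl fun c hc => ?_
                have hc0 : c 0 = F := (Finset.mem_filter.mp hc).2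
                rw [hc0, if_pos hGF]
              · rw [if_neg hGF, zero_mul]
                symm
                apply Finset.sum_eq_zero
                intro c hc
                have hc0 : c 0 = F := (Finset.mem_filter.mp hc).2
                rw [hc0, if_neg hGF]
          _ = ∑ c ∈ SCh n μ ν m G,
                (if rel μ ν G.1 (c 0).1 then dw n μ ν (c 0) * ∏ t : Fin m, dw n μ ν (c t.succ)
                  else 0) :=
              Finset.sum_fiberwise_of_maps_to (fun c _ => Finset.mem_univ _) _
          _ = ∑ c ∈ (SCh n μ ν m G).filter (fun c => rel μ ν G.1 (c 0).1),
                dw n μ ν (c 0) * ∏ t : Fin m, dw n μ ν (c t.succ) :=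
              (Finset.sum_filter _ _).symm
          _ = ∑ c ∈ (Chains n μ ν m).filter (fun c => c (Fin.last m) = G),
                ∏ t : Fin (m+1), dw n μ ν (c t) := by
              refine Finset.sum_congr ?_ fun c hc => ?_
              · ext c
                simp only [SCh, Chains, Finset.mem_filter, Finset.mem_univ, true_and]
                constructor
                · rintro ⟨⟨hmono, hlastG⟩, hrel⟩
                  refine ⟨⟨hmono, ?_⟩, hlastG⟩
                  rw [hlastG]
                  exact hrel
                · rintro ⟨⟨hmono, hrel⟩, hlastG⟩
                  rw [hlastG] at hrel
                  exact ⟨⟨hmono, hlastG⟩, hrel⟩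
              · rw [Fin.prod_univ_succ]
      _ = ∑ c ∈ Chains n μ ν m, ∏ t : Fin (m+1), dw n μ ν (c t) :=
          Finset.sum_fiberwise_of_maps_to (fun c _ => Finset.mem_univ _) _

end Fixed

end

end StretchedSchur
namespace StretchedSchur

open Finset Polynomial

open scoped Classical

noncomputable section

section Stretch

variable {n : ℕ} {μ ν : ℕ → ℕ}

lemma shape_smul (h : Shape n μ ν) (k : ℕ) :
    Shape n (fun j => k * μ j) (fun j => k * ν j) := by
  obtain ⟨⟨hμm, N1, hN1⟩, ⟨hνm, N2, hN2⟩, hνμ, hlen⟩ := h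
  refine ⟨⟨fun i j hij => Nat.mul_le_mul_left k (hμm i j hij),
      N1, fun i hi => show k * μ i = 0 by rw [hN1 i hi, Nat.mul_zero]⟩,
    ⟨fun i j hij => Nat.mul_le_mul_left k (hνm i j hij),
      N2, fun i hi => show k * ν i = 0 by rw [hN2 i hi, Nat.mul_zero]⟩,
    fun i => show k * ν i ≤ k * μ i from Nat.mul_le_mul_left k (hνμ i),
    fun i hi => show k * μ i = 0 by rw [hlen i hi, Nat.mul_zero]⟩

variable (μ ν) in
/-- Extraction of the `t`-th layer of a stretched tableau. -/
def Phi (K : ℕ) (e : E) (t : ℕ) : E :=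
  fun i j => if cell μ ν i j then e i (j * K + t) else 0

variable (n μ ν) in
/-- Interleaving of `K` layers into a stretched tableau. -/
def PsiF {K : ℕ} (hK : 0 < K) (c : Fin K → JT n μ ν) : E :=
  fun i j => if cell (fun r => K * μ r) (fun r => K * ν r) i j
    then (c ⟨j % K, Nat.mod_lt _ hK⟩).1 i (j / K) else 0

variable {K : ℕ}

lemma cell_stretch (hK : 0 < K) {i j t : ℕ} (ht : t < K) (hc : cell μ ν i j) :
    cell (fun r => K * μ r) (fun r => K * ν r) i (j * K + t) := by
  constructor
  · show K * ν i ≤ j * K + t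
    have h1 : ν i * K ≤ j * K := Nat.mul_le_mul_right K hc.1
    have h2 : K * ν i = ν i * K := Nat.mul_comm _ _
    omega
  · show j * K + t < K * μ i
    have h1 : (j + 1) * K ≤ μ i * K := Nat.mul_le_mul_right K hc.2
    have h2 : K * μ i = μ i * K := Nat.mul_comm _ _
    have h3 : (j + 1) * K = j * K + K := by ring
    omega

lemma cell_unstretch (hK : 0 < K) {i j : ℕ}
    (hc : cell (fun r => K * μ r) (fun r => K * ν r) i j) : cell μ ν i (j / K) := by
  constructor
  · rw [Nat.le_div_iff_mul_le hK]
    have h2 : K * ν i = ν i * K := Nat.mul_comm _ _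
    have h1 : K * ν i ≤ j := hc.1
    omega
  · rw [Nat.div_lt_iff_lt_mul hK]
    have h2 : K * μ i = μ i * K := Nat.mul_comm _ _
    have h1 : j < K * μ i := hc.2
    omega

lemma Phi_mem (h : Shape n μ ν) (hK : 0 < K) {e : E}
    (he : e ∈ SSYTF n (fun j => K * μ j) (fun j => K * ν j)) {t : ℕ} (ht : t < K) :
    Phi μ ν K e t ∈ SSYTF n μ ν := by
  refine ⟨?_, ?_, ?_, ?_⟩
  · intro i j hc
    rw [Phi, if_pos hc]
    exact he.1 i _ (cell_stretch hK ht hc)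
  · intro i j hc hc'
    simp only [Phi]
    rw [if_pos hc, if_pos hc']
    refine rowchain he (cell_stretch hK ht hc) (cell_stretch hK ht hc') ?_
    have : j * K ≤ (j+1) * K := Nat.mul_le_mul_right K (by omega)
    omega
  · intro i j hc hc'
    simp only [Phi]
    rw [if_pos hc, if_pos hc']
    exact he.2.2.1 i _ (cell_stretch hK ht hc) (cell_stretch hK ht hc')
  · intro i j hc
    rw [Phi, if_neg hc]

lemma Phi_chain (hK : 0 < K) {e : E}
    (he : e ∈ SSYTF n (fun j => K * μ j) (fun j => K * ν j)) {t : ℕ} (ht : t + 1 < K) :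
    led (Phi μ ν K e t) (Phi μ ν K e (t+1)) := by
  intro i j
  by_cases hc : cell μ ν i j
  · simp only [Phi]
    rw [if_pos hc, if_pos hc]
    have h1 := cell_stretch (μ := μ) (ν := ν) hK (by omega : t < K) hc
    have h2 := cell_stretch (μ := μ) (ν := ν) hK ht hc
    exact he.2.1 i (j * K + t) h1 h2
  · simp only [Phi]
    rw [if_neg hc, if_neg hc]

lemma Phi_cross (hK : 0 < K) {e : E}
    (he : e ∈ SSYTF n (fun j => K * μ j) (fun j => K * ν j)) :
    rel μ ν (Phi μ ν K e (K-1)) (Phi μ ν K e 0) := by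
  intro i j hc hc'
  simp only [Phi]
  rw [if_pos hc, if_pos hc']
  have h1 := cell_stretch (μ := μ) (ν := ν) hK (by omega : K - 1 < K) hc
  have h2 := cell_stretch (μ := μ) (ν := ν) hK hK hc'
  have heq : j * K + (K - 1) + 1 = (j + 1) * K + 0 := by
    have : (j + 1) * K = j * K + K := by ring
    omega
  have := he.2.1 i (j * K + (K-1)) h1 (by rw [heq]; exact h2)
  rw [heq] at this
  exact this

lemma PsiF_mem (h : Shape n μ ν) (hK : 0 < K) {c : Fin K → JT n μ ν}
    (hmono : ∀ s t : Fin K, s.1 + 1 = t.1 → led (c s).1 (c t).1)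
    (hcross : ∀ s t : Fin K, s.1 = K - 1 → t.1 = 0 → rel μ ν (c s).1 (c t).1) :
    PsiF n μ ν hK c ∈ SSYTF n (fun j => K * μ j) (fun j => K * ν j) := by
  refine ⟨?_, ?_, ?_, ?_⟩
  · intro i j hc
    rw [PsiF, if_pos hc]
    exact (c _).2.1 i _ (cell_unstretch hK hc)
  · intro i j hc hc'
    simp only [PsiF]
    rw [if_pos hc, if_pos hc']
    have hq := cell_unstretch hK hc
    have hq' := cell_unstretch hK hc'
    have hdm := Nat.div_add_mod j K
    have hmlt : j % K < K := Nat.mod_lt _ hK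
    by_cases hlast : j % K + 1 < K
    · have hmod : (j + 1) % K = j % K + 1 := by
        conv_lhs => rw [← hdm]
        rw [show K * (j / K) + j % K + 1 = K * (j / K) + (j % K + 1) by omega,
          Nat.mul_add_mod, Nat.mod_eq_of_lt hlast]
      have hdiv : (j + 1) / K = j / K := by
        conv_lhs => rw [← hdm]
        rw [show K * (j / K) + j % K + 1 = K * (j / K) + (j % K + 1) by omega,
          Nat.mul_add_div hK, Nat.div_eq_of_lt hlast, Nat.add_zero]
      have hle := hmono ⟨j % K, Nat.mod_lt _ hK⟩ ⟨(j+1) % K, Nat.mod_lt _ hK⟩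
        (by simp only [] ; omega) i (j / K)
      rw [hdiv]
      exact hle
    · have hjm : j % K = K - 1 := by omega
      have hmod : (j + 1) % K = 0 := by
        conv_lhs => rw [← hdm]
        rw [show K * (j / K) + j % K + 1 = K * (j / K + 1) + 0 by
            have hms : K * (j / K + 1) = K * (j / K) + K := by ring
            omega]
        rw [Nat.mul_add_mod, Nat.zero_mod]
      have hdiv : (j + 1) / K = j / K + 1 := by
        conv_lhs => rw [← hdm]
        rw [show K * (j / K) + j % K + 1 = K * (j / K + 1) + 0 by
            have hms : K * (j / K + 1) = K * (j / K) + K := by ring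
            omega]
        rw [Nat.mul_add_div hK, Nat.zero_div]
      have hcell2 : cell μ ν i (j / K + 1) := by
        have := cell_unstretch hK hc'
        rwa [hdiv] at this
      have hle := hcross ⟨j % K, Nat.mod_lt _ hK⟩ ⟨(j+1) % K, Nat.mod_lt _ hK⟩
        (by simpa using hjm) (by simpa using hmod) i (j / K) hq hcell2
      rw [hdiv]
      exact hle
  · intro i j hc hc'
    simp only [PsiF]
    rw [if_pos hc, if_pos hc']
    exact (c _).2.2.2.1 i _ (cell_unstretch hK hc) (cell_unstretch hK hc')
  · intro i j hc
    rw [PsiF, if_neg hc]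

lemma PsiF_Phi (hK : 0 < K) {e : E}
    (he : e ∈ SSYTF n (fun j => K * μ j) (fun j => K * ν j))
    (c : Fin K → JT n μ ν) (hc : ∀ t : Fin K, (c t).1 = Phi μ ν K e t.1) :
    PsiF n μ ν hK c = e := by
  funext i j
  rw [PsiF]
  by_cases hcell : cell (fun r => K * μ r) (fun r => K * ν r) i j
  · rw [if_pos hcell, hc _, Phi, if_pos (cell_unstretch hK hcell)]
    show e i (j / K * K + j % K) = e i j
    congr 1
    have h1 := Nat.div_add_mod j K
    have h2 : j / K * K = K * (j / K) := Nat.mul_comm _ _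
    omega
  · rw [if_neg hcell, (he.2.2.2 i j hcell).symm]

lemma Phi_PsiF (hK : 0 < K) (c : Fin K → JT n μ ν) (t : Fin K) :
    Phi μ ν K (PsiF n μ ν hK c) t.1 = (c t).1 := by
  funext i j
  rw [Phi]
  by_cases hc : cell μ ν i j
  · rw [if_pos hc, PsiF, if_pos (cell_stretch hK t.2 hc)]
    have hmod : (j * K + t.1) % K = t.1 := by
      rw [show j * K + t.1 = K * j + t.1 by ring, Nat.mul_add_mod, Nat.mod_eq_of_lt t.2]
    have hdiv : (j * K + t.1) / K = j := by
      rw [show j * K + t.1 = K * j + t.1 by ring, Nat.mul_add_div hK,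
        Nat.div_eq_of_lt t.2, Nat.add_zero]
    have he1 : (⟨(j * K + t.1) % K, Nat.mod_lt _ hK⟩ : Fin K) = t :=
      Fin.ext (by simpa using hmod)
    rw [hdiv, he1]
  · rw [if_neg hc, ((c t).2.2.2.2 i j hc).symm]

lemma inner_reindex (hK : 0 < K) (aa bb : ℕ) (f : ℕ → MvPolynomial (Fin n) ℤ) :
    ∏ j ∈ Finset.Ico (K * aa) (K * bb), f j
      = ∏ q ∈ Finset.Ico aa bb, ∏ t ∈ Finset.range K, f (q * K + t) := by
  rw [← Finset.prod_product']
  refine Finset.prod_nbij' (fun j => (j / K, j % K)) (fun p => p.1 * K + p.2)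
    ?_ ?_ ?_ ?_ ?_
  · intro j hj
    rw [Finset.mem_Ico] at hj
    rw [Finset.mem_product, Finset.mem_Ico, Finset.mem_range]
    refine ⟨⟨?_, ?_⟩, Nat.mod_lt _ hK⟩
    · rw [Nat.le_div_iff_mul_le hK]
      have : K * aa = aa * K := Nat.mul_comm _ _
      omega
    · rw [Nat.div_lt_iff_lt_mul hK]
      have : K * bb = bb * K := Nat.mul_comm _ _
      omega
  · intro p hp
    rw [Finset.mem_product, Finset.mem_Ico, Finset.mem_range] at hp
    rw [Finset.mem_Ico]
    obtain ⟨⟨h1, h2⟩, h3⟩ := hp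
    constructor
    · show K * aa ≤ p.1 * K + p.2
      have h5 : K * aa ≤ K * p.1 := Nat.mul_le_mul_left K h1
      have h6 : K * p.1 = p.1 * K := Nat.mul_comm _ _
      omega
    · show p.1 * K + p.2 < K * bb
      have h5 : K * (p.1 + 1) ≤ K * bb := Nat.mul_le_mul_left K h2
      have h4 : K * (p.1 + 1) = p.1 * K + K := by ring
      omega
  · intro j _
    show j / K * K + j % K = j
    have h1 := Nat.div_add_mod j K
    have h2 : j / K * K = K * (j / K) := Nat.mul_comm _ _
    omega
  · intro p hp
    rw [Finset.mem_product, Finset.mem_range] at hp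
    have h3 := hp.2
    refine Prod.ext ?_ ?_
    · show (p.1 * K + p.2) / K = p.1
      rw [show p.1 * K + p.2 = K * p.1 + p.2 by ring, Nat.mul_add_div hK,
        Nat.div_eq_of_lt h3, Nat.add_zero]
    · show (p.1 * K + p.2) % K = p.2
      rw [show p.1 * K + p.2 = K * p.1 + p.2 by ring, Nat.mul_add_mod,
        Nat.mod_eq_of_lt h3]
  · intro j _
    show f j = f (j / K * K + j % K)
    congr 1
    have h1 := Nat.div_add_mod j K
    have h2 : j / K * K = K * (j / K) := Nat.mul_comm _ _
    omega

lemma wtm_stretch (hK : 0 < K) (e : E) :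
    wtm n (fun j => K * μ j) (fun j => K * ν j) e
      = ∏ t ∈ Finset.range K, wtm n μ ν (Phi μ ν K e t) := by
  rw [wtm]
  calc ∏ i ∈ Finset.range n, ∏ j ∈ Finset.Ico (K * ν i) (K * μ i), xv n (e i j)
      = ∏ i ∈ Finset.range n, ∏ t ∈ Finset.range K, ∏ q ∈ Finset.Ico (ν i) (μ i),
          xv n (e i (q * K + t)) := by
        refine Finset.prod_congr rfl fun i _ => ?_
        rw [inner_reindex hK, Finset.prod_comm]
    _ = ∏ t ∈ Finset.range K, ∏ i ∈ Finset.range n, ∏ q ∈ Finset.Ico (ν i) (μ i),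
          xv n (e i (q * K + t)) := Finset.prod_comm
    _ = ∏ t ∈ Finset.range K, wtm n μ ν (Phi μ ν K e t) := by
        refine Finset.prod_congr rfl fun t _ => ?_
        rw [wtm]
        refine Finset.prod_congr rfl fun i _ => Finset.prod_congr rfl fun q hq => ?_
        rw [Finset.mem_Ico] at hq
        have hcq : cell μ ν i q := ⟨hq.1, hq.2⟩
        rw [Phi, if_pos hcq]

lemma schur_stretch (h : Shape n μ ν) [Fintype (JT n μ ν)] (m : ℕ) :
    schur n (fun j => (m+1) * μ j) (fun j => (m+1) * ν j)
      = ∑ c ∈ Chains n μ ν m, ∏ t : Fin (m+1), dw n μ ν (c t) := by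
  have hK : 0 < m + 1 := Nat.succ_pos m
  have hsh := shape_smul h (m+1)
  rw [schur_eq hsh]
  refine Finset.sum_bij'
    (fun e he => fun t : Fin (m+1) => (⟨Phi μ ν (m+1) e t.1,
      Phi_mem h hK ((SSYTF_finite hsh).mem_toFinset.mp he) t.2⟩ : JT n μ ν))
    (fun c _ => PsiF n μ ν hK c) ?_ ?_ ?_ ?_ ?_
  · intro e he
    have he' := (SSYTF_finite hsh).mem_toFinset.mp he
    simp only [Chains, Finset.mem_filter, Finset.mem_univ, true_and]
    constructor
    · intro t
      exact Phi_chain hK he' (by have := t.2; omega : t.1 + 1 < m + 1)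
    · exact Phi_cross hK he'
  · intro c hc
    simp only [Chains, Finset.mem_filter, Finset.mem_univ, true_and] at hc
    obtain ⟨hmono, hcross⟩ := hc
    refine (SSYTF_finite hsh).mem_toFinset.mpr (PsiF_mem h hK ?_ ?_)
    · intro s t hst
      have hs : s.1 < m := by have := t.2; omega
      have h1 : (⟨s.1, hs⟩ : Fin m).castSucc = s := Fin.ext rfl
      have h2 : (⟨s.1, hs⟩ : Fin m).succ = t := Fin.ext (by simp [Fin.succ]; omega)
      have h3 := hmono ⟨s.1, hs⟩
      rw [h1, h2] at h3
      exact h3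
    · intro s t hs ht
      have h1 : s = Fin.last m := Fin.ext (by simp [Fin.last]; omega)
      have h2 : t = 0 := Fin.ext (by rw [ht, Fin.val_zero])
      rw [h1, h2]
      exact hcross
  · intro e he
    exact PsiF_Phi hK ((SSYTF_finite hsh).mem_toFinset.mp he) _ (fun t => rfl)
  · intro c _
    funext t
    exact Subtype.ext (Phi_PsiF hK c t)
  · intro e he
    rw [wtm_stretch hK e, Finset.prod_range]
    rfl

lemma schur_zero (h : Shape n μ ν) :
    schur n (fun j => 0 * μ j) (fun j => 0 * ν j) = 1 := by
  rw [schur_eq (shape_smul h 0)]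
  have hfs : (SSYTF_finite (shape_smul h 0)).toFinset = {(fun _ _ => 0 : E)} := by
    ext e
    rw [Set.Finite.mem_toFinset, Finset.mem_singleton]
    constructor
    · intro he
      funext i j
      refine he.2.2.2 i j ?_
      intro hc
      have h2 : j < 0 * μ i := hc.2
      omega
    · rintro rfl
      refine ⟨?_, ?_, ?_, ?_⟩
      · intro i j hc
        have h2 : j < 0 * μ i := hc.2
        omega
      · intro i j hc _
        have h2 : j < 0 * μ i := hc.2
        omega
      · intro i j hc _
        have h2 : j < 0 * μ i := hc.2
        omega
      · intro i j _
        rfl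
  rw [hfs, Finset.sum_singleton, wtm]
  apply Finset.prod_eq_one
  intro i _
  have : (0 : ℕ) * μ i = 0 := Nat.zero_mul _
  rw [show Finset.Ico ((fun j => 0 * ν j) i) ((fun j => 0 * μ j) i)
      = Finset.Ico (0 * ν i) (0 * μ i) from rfl, this, Finset.Ico_eq_empty (by omega),
    Finset.prod_empty]

end Stretch

end

end StretchedSchur
namespace StretchedSchur

open Finset Polynomial

open scoped Classical

noncomputable section

section Lmach

variable {n : ℕ} {μ ν : ℕ → ℕ}

/-- The index of the top row of column `j`. -/
def topRow (h : Shape n μ ν) (j : ℕ) : ℕ :=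
  Nat.find (⟨n, by have h1 := h.2.2.1 n; have h2 := h.2.2.2 n (le_refl n); omega⟩ : ∃ i, ν i ≤ j)

lemma topRow_le {h : Shape n μ ν} {i j : ℕ} (hi : ν i ≤ j) : topRow h j ≤ i :=
  Nat.find_le hi

lemma topRow_spec {h : Shape n μ ν} {i j : ℕ} (hi : topRow h j ≤ i) : ν i ≤ j := by
  have hex : ∃ i, ν i ≤ j :=
    ⟨n, by have h1 := h.2.2.1 n; have h2 := h.2.2.2 n (le_refl n); omega⟩
  exact le_trans (h.2.1.1 _ i hi) (Nat.find_spec hex)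

lemma topRow_mono (h : Shape n μ ν) {j j' : ℕ} (hjj : j ≤ j') : topRow h j' ≤ topRow h j :=
  topRow_le (le_trans (topRow_spec (le_refl _)) hjj)

lemma topRow_cell {h : Shape n μ ν} {i j : ℕ} (hc : cell μ ν i j) : topRow h j ≤ i :=
  topRow_le hc.1

lemma cell_of_Icc {h : Shape n μ ν} {i j r : ℕ} (hc : cell μ ν i j)
    (hr1 : topRow h j ≤ r) (hr2 : r ≤ i) : cell μ ν r j :=
  ⟨topRow_spec hr1, lt_of_lt_of_le hc.2 (h.1.1 r i hr2)⟩

lemma cell_top {h : Shape n μ ν} {i j : ℕ} (hc : cell μ ν i j) : cell μ ν (topRow h j) j :=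
  cell_of_Icc hc (le_refl _) (topRow_cell hc)

variable (μ ν) in
/-- The lower bound operator. -/
def LF (h : Shape n μ ν) (G : E) : E := fun i j =>
  if cell μ ν i j then
    max ((Finset.Icc (topRow h j) i).sup
      (fun r => if 1 ≤ j ∧ cell μ ν r (j-1) then G r (j-1) + (i - r) else 0))
      (i + 1 - topRow h j)
  else 0

variable (μ ν) in
/-- The minimal tableau. -/
def M0 (h : Shape n μ ν) : E := fun i j =>
  if cell μ ν i j then i + 1 - topRow h j else 0

variable {h : Shape n μ ν}

lemma col_lb {G : E} (hG : G ∈ SSYTF n μ ν) {i j : ℕ} (hc : cell μ ν i j) :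
    i + 1 - topRow h j ≤ G i j := by
  have hct : cell μ ν (topRow h j) j := cell_top hc
  have h1 := (hG.1 _ j hct).1
  have h2 := colchain hG h hct hc (topRow_cell hc)
  omega

lemma LF_le {G : E} (hG : G ∈ SSYTF n μ ν) {i j : ℕ} (hc : cell μ ν i j) :
    LF μ ν h G i j ≤ G i j := by
  rw [LF, if_pos hc]
  refine max_le ?_ (col_lb hG hc)
  refine Finset.sup_le ?_
  intro r hr
  rw [Finset.mem_Icc] at hr
  by_cases hg : 1 ≤ j ∧ cell μ ν r (j-1)
  · rw [if_pos hg]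
    have hcr : cell μ ν r j := cell_of_Icc hc hr.1 hr.2
    have h1 : G r (j-1) ≤ G r j := by
      have := hG.2.1 r (j-1) hg.2 (by rw [show j - 1 + 1 = j by omega]; exact hcr)
      rwa [show j - 1 + 1 = j by omega] at this
    have h2 := colchain hG h hcr hc hr.2
    omega
  · rw [if_neg hg]
    omega

lemma LF_pos {G : E} {i j : ℕ} (hc : cell μ ν i j) :
    i + 1 - topRow h j ≤ LF μ ν h G i j := by
  rw [LF, if_pos hc]
  exact le_max_right _ _

lemma LF_sup_le {G : E} {i j y : ℕ} (hc : cell μ ν i j)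
    (h1 : ∀ r, topRow h j ≤ r → r ≤ i → 1 ≤ j → cell μ ν r (j-1) → G r (j-1) + (i - r) ≤ y)
    (h2 : i + 1 - topRow h j ≤ y) : LF μ ν h G i j ≤ y := by
  rw [LF, if_pos hc]
  refine max_le (Finset.sup_le ?_) h2
  intro r hr
  rw [Finset.mem_Icc] at hr
  by_cases hg : 1 ≤ j ∧ cell μ ν r (j-1)
  · rw [if_pos hg]
    exact h1 r hr.1 hr.2 hg.1 hg.2
  · rw [if_neg hg]
    omega

lemma LF_gen_le {G : E} {i j r : ℕ} (hc : cell μ ν i j) (hr1 : topRow h j ≤ r) (hr2 : r ≤ i)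
    (hj : 1 ≤ j) (hcr : cell μ ν r (j-1)) : G r (j-1) + (i - r) ≤ LF μ ν h G i j := by
  rw [LF, if_pos hc]
  refine le_trans ?_ (le_max_left _ _)
  refine le_trans ?_ (Finset.le_sup (Finset.mem_Icc.mpr ⟨hr1, hr2⟩))
  rw [if_pos ⟨hj, hcr⟩]

lemma LF_mem {G : E} (hG : G ∈ SSYTF n μ ν) : LF μ ν h G ∈ SSYTF n μ ν := by
  refine ⟨?_, ?_, ?_, ?_⟩
  · intro i j hc
    constructor
    · have := LF_pos (G := G) (h := h) hc
      have := topRow_cell (h := h) hc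
      omega
    · exact le_trans (LF_le hG hc) (hG.1 i j hc).2
  · intro i j hc hc'
    have hgen : G i ((j+1)-1) + (i - i) ≤ LF μ ν h G i (j+1) :=
      LF_gen_le hc' (topRow_cell hc') (le_refl i) (by omega)
        (by rw [show j + 1 - 1 = j by omega]; exact hc)
    rw [show j + 1 - 1 = j by omega] at hgen
    have h1 := LF_le (h := h) hG hc
    omega
  · intro i j hc hc'
    have hpos : 1 ≤ LF μ ν h G (i+1) j := by
      have := LF_pos (G := G) (h := h) hc'
      have := topRow_cell (h := h) hc'
      omega
    have key : LF μ ν h G i j + 1 ≤ LF μ ν h G (i+1) j := by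
      have hsup : LF μ ν h G i j ≤ LF μ ν h G (i+1) j - 1 := by
        refine LF_sup_le hc ?_ ?_
        · intro r hr1 hr2 hj hcr
          have := LF_gen_le (G := G) hc' hr1 (by omega) hj hcr
          omega
        · have := LF_pos (G := G) (h := h) hc'
          have := topRow_cell (h := h) hc
          omega
      omega
    omega
  · intro i j hc
    rw [LF, if_neg hc]

lemma LF_iff {G F : E} (hG : G ∈ SSYTF n μ ν) (hF : F ∈ SSYTF n μ ν) :
    rel μ ν G F ↔ led (LF μ ν h G) F := by
  constructor
  · intro hrel i j
    by_cases hc : cell μ ν i j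
    · refine LF_sup_le hc ?_ (col_lb hF hc)
      intro r hr1 hr2 hj hcr
      have hcr' : cell μ ν r j := cell_of_Icc hc hr1 hr2
      have h1 : G r (j-1) ≤ F r j := by
        have h0 := hrel r (j-1) hcr (by rw [show j - 1 + 1 = j by omega]; exact hcr')
        rwa [show j - 1 + 1 = j by omega] at h0
      have h2 := colchain hF h hcr' hc hr2
      omega
    · rw [LF, if_neg hc]
      omega
  · intro hled i j hc hc'
    have hgen : G i ((j+1)-1) + (i - i) ≤ LF μ ν h G i (j+1) :=
      LF_gen_le hc' (topRow_cell hc') (le_refl i) (by omega)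
        (by rw [show j + 1 - 1 = j by omega]; exact hc)
    rw [show j + 1 - 1 = j by omega] at hgen
    have := hled i (j+1)
    omega

lemma M0_mem : M0 μ ν h ∈ SSYTF n μ ν := by
  refine ⟨?_, ?_, ?_, ?_⟩
  · intro i j hc
    rw [M0, if_pos hc]
    have h1 := topRow_cell (h := h) hc
    have h2 : i < n := h.cell_row_lt hc
    omega
  · intro i j hc hc'
    simp only [M0]
    rw [if_pos hc, if_pos hc']
    have := topRow_mono h (by omega : j ≤ j + 1)
    omega
  · intro i j hc hc'
    simp only [M0]
    rw [if_pos hc, if_pos hc']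
    have h1 := topRow_cell (h := h) hc
    have h2 := topRow_cell (h := h) hc'
    omega
  · intro i j hc
    rw [M0, if_neg hc]

lemma LF_M0 : LF μ ν h (M0 μ ν h) = M0 μ ν h := by
  funext i j
  by_cases hc : cell μ ν i j
  · have heq : M0 μ ν h i j = i + 1 - topRow h j := by rw [M0, if_pos hc]
    rw [heq]
    refine le_antisymm ?_ (LF_pos hc)
    refine LF_sup_le hc ?_ (le_refl _)
    intro r hr1 hr2 hj hcr
    rw [M0, if_pos hcr]
    have h1 : topRow h j ≤ topRow h (j-1) := topRow_mono h (by omega)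
    have h2 : topRow h (j-1) ≤ r := topRow_cell hcr
    omega
  · rw [LF, if_neg hc, M0, if_neg hc]

lemma LF_fix {G : E} (hG : G ∈ SSYTF n μ ν) (hfix : LF μ ν h G = G) : G = M0 μ ν h := by
  have main : ∀ j i, cell μ ν i j → G i j = i + 1 - topRow h j := by
    intro j
    induction j with
    | zero =>
      intro i hc
      have h1 := congrFun (congrFun hfix i) 0
      rw [LF, if_pos hc] at h1
      rw [← h1]
      have hsup : (Finset.Icc (topRow h 0) i).sup
          (fun r => if 1 ≤ 0 ∧ cell μ ν r (0-1) then G r (0-1) + (i - r) else 0) = 0 := by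
        refine Nat.le_zero.mp (Finset.sup_le fun r _ => ?_)
        rw [if_neg (by omega)]
      rw [hsup]
      omega
    | succ j ih =>
      intro i hc
      have h1 := congrFun (congrFun hfix i) (j+1)
      rw [LF, if_pos hc] at h1
      rw [← h1]
      have hsup : (Finset.Icc (topRow h (j+1)) i).sup
          (fun r => if 1 ≤ j+1 ∧ cell μ ν r (j+1-1) then G r (j+1-1) + (i - r) else 0)
          ≤ i + 1 - topRow h (j+1) := by
        refine Finset.sup_le fun r hr => ?_
        rw [Finset.mem_Icc] at hr
        by_cases hg : 1 ≤ j+1 ∧ cell μ ν r (j+1-1)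
        · rw [if_pos hg]
          have hcr : cell μ ν r j := by
            have := hg.2
            rwa [show j + 1 - 1 = j by omega] at this
          have h2 : G r (j+1-1) = r + 1 - topRow h j := by
            rw [show j + 1 - 1 = j by omega]
            exact ih r hcr
          rw [h2]
          have h3 : topRow h (j+1) ≤ topRow h j := topRow_mono h (by omega)
          have h4 : topRow h j ≤ r := topRow_cell hcr
          omega
        · rw [if_neg hg]
          omega
      omega
  funext i j
  by_cases hc : cell μ ν i j
  · rw [main j i hc, M0, if_pos hc]
  · rw [hG.2.2.2 i j hc, M0, if_neg hc]

end Lmach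

end

end StretchedSchur

open scoped Classical
open StretchedSchur

/-- For partitions `μ ⊇ ν` of length at most `n`, the sequence
`s_{kμ/kν}(x₁,…,xₙ)`, `k = 0,1,2,…`, satisfies the linear recurrence with
characteristic polynomial `χ(t) = ∏_{T ∈ T^n_{μ/ν}} (t − x^{w(T)})`. -/
theorem stretched_schur_recurrence_pure (n : ℕ) (mu nu : ℕ → ℕ)
    (hm : IsPartition mu) (hn : IsPartition nu)
    (hmlen : ∀ i, n ≤ i → mu i = 0) (hnlen : ∀ i, n ≤ i → nu i = 0)
    (hnm : ∀ i, nu i ≤ mu i) :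
    ∀ k : ℕ,
      ∑ i ∈ Finset.range ((charPoly n mu nu).natDegree + 1),
        (charPoly n mu nu).coeff i *
          schur n (fun j => (k + i) * mu j) (fun j => (k + i) * nu j) = 0 := by
  intro k
  have h : Shape n mu nu := ⟨hm, hn, hnm, hmlen⟩
  letI : Fintype (JT n mu nu) := (SSYTF_finite h).fintype
  set χ : Polynomial (MvPolynomial (Fin n) ℤ) :=
    ∏ H : JT n mu nu, (Polynomial.X - Polynomial.C (dw n mu nu H)) with hχ
  have hcp : charPoly n mu nu = χ := by
    rw [charPoly_eq h, hχ]
    exact Finset.prod_subtype _ (fun x => (SSYTF_finite h).mem_toFinset) _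
  have ha : ∀ m : ℕ, schur n (fun j => (m+1) * mu j) (fun j => (m+1) * nu j)
      = Matrix.trace (CM n mu nu * NM n mu nu ^ m) := fun m => by
    rw [schur_stretch h m, trace_eq]
  have ha0 : schur n (fun j => 0 * mu j) (fun j => 0 * nu j) = 1 := schur_zero h
  have hch : Polynomial.aeval (NM n mu nu) χ = 0 := chN n mu nu
  have haev : ∑ i ∈ Finset.range (χ.natDegree + 1), χ.coeff i • NM n mu nu ^ i = 0 := by
    rw [← Polynomial.aeval_eq_sum_range, hch]
  rw [hcp]
  cases k with
  | succ k' =>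
    calc ∑ i ∈ Finset.range (χ.natDegree + 1), χ.coeff i *
            schur n (fun j => (k' + 1 + i) * mu j) (fun j => (k' + 1 + i) * nu j)
        = ∑ i ∈ Finset.range (χ.natDegree + 1),
            Matrix.trace (χ.coeff i • (CM n mu nu * NM n mu nu ^ (k' + i))) := by
          refine Finset.sum_congr rfl fun i _ => ?_
          rw [show k' + 1 + i = (k' + i) + 1 by omega, ha (k' + i),
            Matrix.trace_smul, smul_eq_mul]
      _ = Matrix.trace (∑ i ∈ Finset.range (χ.natDegree + 1),
            χ.coeff i • (CM n mu nu * NM n mu nu ^ (k' + i))) :=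
          (Matrix.trace_sum _ _).symm
      _ = Matrix.trace (CM n mu nu * NM n mu nu ^ k' *
            ∑ i ∈ Finset.range (χ.natDegree + 1), χ.coeff i • NM n mu nu ^ i) := by
          congr 1
          rw [Finset.mul_sum]
          refine Finset.sum_congr rfl fun i _ => ?_
          rw [mul_smul_comm, pow_add, Matrix.mul_assoc]
      _ = 0 := by rw [haev, mul_zero, Matrix.trace_zero]
  | zero =>
    rw [Finset.sum_range_succ']
    simp only [Nat.zero_add]
    set Q : Matrix (JT n mu nu) (JT n mu nu) (MvPolynomial (Fin n) ℤ) :=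
      ∑ i ∈ Finset.range χ.natDegree, χ.coeff (i+1) • NM n mu nu ^ i with hQdef
    have hNQ : NM n mu nu * Q = -(χ.coeff 0 • (1 : Matrix (JT n mu nu) (JT n mu nu)
        (MvPolynomial (Fin n) ℤ))) := by
      refine eq_neg_of_add_eq_zero_right ?_
      rw [← haev, Finset.sum_range_succ', pow_zero, add_comm]
      congr 1
      rw [hQdef, Finset.mul_sum]
      refine Finset.sum_congr rfl fun i _ => ?_
      rw [mul_smul_comm, pow_succ']
    have hfixiff : ∀ G : JT n mu nu,
        (⟨LF mu nu h G.1, LF_mem G.2⟩ : JT n mu nu) = G ↔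
          G = (⟨M0 mu nu h, M0_mem⟩ : JT n mu nu) := by
      intro G
      constructor
      · intro hLG
        exact Subtype.ext (LF_fix G.2 (Subtype.ext_iff.mp hLG))
      · rintro rfl
        exact Subtype.ext LF_M0
    have htr : Matrix.trace (CM n mu nu * Q) = -(χ.coeff 0) := by
      calc Matrix.trace (CM n mu nu * Q)
          = ∑ G : JT n mu nu, ∑ F : JT n mu nu, CM n mu nu G F * Q F G := by
            rw [Matrix.trace]
            exact Finset.sum_congr rfl fun G _ => Matrix.mul_apply
        _ = ∑ G : JT n mu nu, ∑ F : JT n mu nu,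
              NM n mu nu (⟨LF mu nu h G.1, LF_mem G.2⟩ : JT n mu nu) F * Q F G := by
            refine Finset.sum_congr rfl fun G _ => Finset.sum_congr rfl fun F _ => ?_
            rw [CM_apply, NM_apply]
            congr 1
            exact if_congr (LF_iff G.2 F.2) rfl rfl
        _ = ∑ G : JT n mu nu,
              (NM n mu nu * Q) (⟨LF mu nu h G.1, LF_mem G.2⟩ : JT n mu nu) G := by
            exact Finset.sum_congr rfl fun G _ => (Matrix.mul_apply).symm
        _ = ∑ G : JT n mu nu, (if G = (⟨M0 mu nu h, M0_mem⟩ : JT n mu nu)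
              then -(χ.coeff 0) else 0) := by
            refine Finset.sum_congr rfl fun G _ => ?_
            rw [hNQ, Matrix.neg_apply, Matrix.smul_apply, Matrix.one_apply]
            rw [if_congr (hfixiff G) rfl rfl]
            by_cases hG : G = (⟨M0 mu nu h, M0_mem⟩ : JT n mu nu)
            · rw [if_pos hG, if_pos hG, smul_eq_mul, mul_one]
            · rw [if_neg hG, if_neg hG, smul_eq_mul, mul_zero, neg_zero]
        _ = -(χ.coeff 0) := by
            rw [Finset.sum_ite_eq' Finset.univ _ (fun _ => -(χ.coeff 0)),
              if_pos (Finset.mem_univ _)]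
    calc (∑ i ∈ Finset.range χ.natDegree, χ.coeff (i+1) *
            schur n (fun j => (i + 1) * mu j) (fun j => (i + 1) * nu j))
          + χ.coeff 0 * schur n (fun j => 0 * mu j) (fun j => 0 * nu j)
        = Matrix.trace (CM n mu nu * Q) + χ.coeff 0 := by
          congr 1
          · calc ∑ i ∈ Finset.range χ.natDegree, χ.coeff (i+1) *
                  schur n (fun j => (i + 1) * mu j) (fun j => (i + 1) * nu j)
                = ∑ i ∈ Finset.range χ.natDegree,
                    Matrix.trace (χ.coeff (i+1) • (CM n mu nu * NM n mu nu ^ i)) := by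
                  refine Finset.sum_congr rfl fun i _ => ?_
                  rw [ha i, Matrix.trace_smul, smul_eq_mul]
              _ = Matrix.trace (∑ i ∈ Finset.range χ.natDegree,
                    χ.coeff (i+1) • (CM n mu nu * NM n mu nu ^ i)) :=
                  (Matrix.trace_sum _ _).symm
              _ = Matrix.trace (CM n mu nu * Q) := by
                  congr 1
                  rw [hQdef, Finset.mul_sum]
                  exact Finset.sum_congr rfl fun i _ => (mul_smul_comm _ _ _).symm
          · rw [ha0, mul_one]
        _ = 0 := by rw [htr]; ring
end
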